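/- arXiv:1309.0222 — 5 statements merged into one kernel-verified Lean document; each statement's English description precedes it below -/
import Mathlib

section
/- Let K be continuous, antisymmetric, and L-Lipschitz in each variable uniformly in the other. Then for every Z_N^in ∈ (ℝ^d)^N, the time-dependent empirical measure μ_N(t) = (1/N)∑_{k=1}^N δ_{z_k(t)}, where (z_1(t),…,z_N(t)) solves the N-particle ODE ż_k = (1/N)∑_l K(z_k, z_l) with initial data Z_N^in, is a weak solution of the mean field equation ∂_t μ + div(μ 𝒦μ) = 0 with initial datum μ_{Z_N^in}. -/
open MeasureTheory ENNReal

/-- The empirical measure `μ_{Z_N} = (1/N) ∑_k δ_{z_k}` of an `N`-tuple of points. -/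
noncomputable def empiricalMeasure {E : Type*} [MeasurableSpace E] {N : ℕ}
    (Z : Fin N → E) : Measure E :=
  (N : ℝ≥0∞)⁻¹ • ∑ k, Measure.dirac (Z k)

lemma integral_empirical {E : Type*} [MeasurableSpace E] [TopologicalSpace E]
    [BorelSpace E] [T1Space E] {N : ℕ} (hN : 0 < N) (Z : Fin N → E)
    {F : Type*} [NormedAddCommGroup F] [NormedSpace ℝ F] [CompleteSpace F]
    (f : E → F) (hf : StronglyMeasurable f) :
    ∫ w, f w ∂(empiricalMeasure Z) = (N : ℝ)⁻¹ • ∑ k, f (Z k) := by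
  have hint : ∀ k : Fin N, Integrable f (Measure.dirac (Z k)) := by
    intro k
    refine ⟨hf.aestronglyMeasurable, ?_⟩
    simp [HasFiniteIntegral, lintegral_dirac]
  rw [empiricalMeasure, integral_smul_measure, integral_finset_sum_measure
    (fun k _ => hint k)]
  rw [Finset.sum_congr rfl fun k _ => integral_dirac f (Z k)]
  simp

/-- The time-dependent empirical measure of a solution of the `N`-particle ODE system
`żₖ = (1/N) ∑_l K(zₖ, z_l)` is a weak solution of the mean-field equation
`∂ₜμ + div(μ 𝒦μ) = 0` with initial datum `μ_{Z_N^in}`. -/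
theorem stmt_10 (d N : ℕ) (hN : 0 < N) (L : ℝ) (hL : 0 < L)
    (K : EuclideanSpace ℝ (Fin d) × EuclideanSpace ℝ (Fin d) → EuclideanSpace ℝ (Fin d))
    (hKcont : Continuous K)
    (hKanti : ∀ z z', K (z, z') + K (z', z) = 0)
    (hKlip1 : ∀ z' z₁ z₂, ‖K (z₁, z') - K (z₂, z')‖ ≤ L * ‖z₁ - z₂‖)
    (hKlip2 : ∀ z z₁ z₂, ‖K (z, z₁) - K (z, z₂)‖ ≤ L * ‖z₁ - z₂‖)
    (Zin : Fin N → EuclideanSpace ℝ (Fin d))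
    (z : ℝ → Fin N → EuclideanSpace ℝ (Fin d))
    (hz0 : z 0 = Zin)
    (hODE : ∀ k t, HasDerivAt (fun s => z s k)
      ((N : ℝ)⁻¹ • ∑ l, K (z t k, z t l)) t) :
    (empiricalMeasure (z 0) = empiricalMeasure Zin) ∧
    ∀ φ : EuclideanSpace ℝ (Fin d) → ℝ, ContDiff ℝ 1 φ → HasCompactSupport φ →
      ∀ t : ℝ, HasDerivAt (fun s => ∫ w, φ w ∂(empiricalMeasure (z s)))
        (∫ w, fderiv ℝ φ w (∫ w', K (w, w') ∂(empiricalMeasure (z t)))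
          ∂(empiricalMeasure (z t))) t := by
  refine ⟨by rw [hz0], fun φ hφ hφc t => ?_⟩
  set v : Fin N → EuclideanSpace ℝ (Fin d) :=
    fun k => (N : ℝ)⁻¹ • ∑ l, K (z t k, z t l) with hv
  set g : EuclideanSpace ℝ (Fin d) → EuclideanSpace ℝ (Fin d) :=
    fun w => (N : ℝ)⁻¹ • ∑ l, K (w, z t l) with hg
  have hgcont : Continuous g := by
    refine Continuous.const_smul (g := fun w => ∑ l, K (w, z t l)) ?_ (N : ℝ)⁻¹
    exact continuous_finset_sum _ fun l _ =>
      hKcont.comp (continuous_id.prodMk continuous_const)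
  have hginner : ∀ w, (∫ w', K (w, w') ∂(empiricalMeasure (z t))) = g w := by
    intro w
    exact integral_empirical hN (z t) (fun w' => K (w, w'))
      (hKcont.comp (continuous_const.prodMk continuous_id)).stronglyMeasurable
  have hφ1 : Continuous fun w => fderiv ℝ φ w := hφ.continuous_fderiv one_ne_zero
  have hhcont : Continuous fun w => fderiv ℝ φ w (g w) := hφ1.clm_apply hgcont
  have houter : (∫ w, fderiv ℝ φ w (∫ w', K (w, w') ∂(empiricalMeasure (z t)))
      ∂(empiricalMeasure (z t)))
      = (N : ℝ)⁻¹ • ∑ k, fderiv ℝ φ (z t k) (g (z t k)) := by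
    simp_rw [hginner]
    exact integral_empirical hN (z t) _ hhcont.stronglyMeasurable
  rw [houter]
  have hfun : (fun s => ∫ w, φ w ∂(empiricalMeasure (z s)))
      = fun s => (N : ℝ)⁻¹ • ∑ k, φ (z s k) := by
    funext s
    exact integral_empirical hN (z s) φ hφ.continuous.stronglyMeasurable
  rw [hfun]
  have hk : ∀ k : Fin N, HasDerivAt (fun s => φ (z s k))
      (fderiv ℝ φ (z t k) (v k)) t :=
    fun k => ((hφ.differentiable one_ne_zero (z t k)).hasFDerivAt).comp_hasDerivAt t
      (hODE k t)
  have hsum := HasDerivAt.fun_sum (fun k (_ : k ∈ Finset.univ) => hk k)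
  have := hsum.const_smul ((N : ℝ)⁻¹)
  simpa [Pi.smul_def] using this
end

section
/- Let P_N be a symmetric probability measure on (ℝ^d)^N and Z_N ↦ μ_{Z_N} the empirical measure map. Then for every bounded measurable φ_m on (ℝ^d)^m and m ≤ N: |⟨∫ μ_{Z_N}^{⊗m} P_N(dZ_N) − P_{N:m}, φ_m⟩| ≤ (m(m−1)/N)·‖φ_m‖_∞. -/
open MeasureTheory ENNReal

/-- The `m`-th marginal of a measure on `(ℝ^d)^N`: the push-forward under the
projection onto the first `m` coordinates. -/
noncomputable def marginal {E : Type*} [MeasurableSpace E] {N : ℕ} (m : ℕ) (h : m ≤ N)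
    (P : Measure (Fin N → E)) : Measure (Fin m → E) :=
  P.map fun Z => fun i : Fin m => Z (Fin.castLE h i)

/- ### Auxiliary lemmas -/

lemma exists_perm_extend {n : ℕ} {α : Type*} [Fintype α] [DecidableEq α]
    (f g : Fin n → α) (hf : Function.Injective f) (hg : Function.Injective g) :
    ∃ σ : Equiv.Perm α, ∀ i, σ (f i) = g i := by
  classical
  have hcf : Fintype.card (Set.range f) = n :=
    (Set.card_range_of_injective hf).trans (Fintype.card_fin n)
  have hcg : Fintype.card (Set.range g) = n :=
    (Set.card_range_of_injective hg).trans (Fintype.card_fin n)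
  have hc : Fintype.card ↥(Set.range f)ᶜ = Fintype.card ↥(Set.range g)ᶜ := by
    rw [Fintype.card_compl_set, Fintype.card_compl_set, hcf, hcg]
  let ef : Fin n ≃ Set.range f := Equiv.ofInjective f hf
  let eg : Fin n ≃ Set.range g := Equiv.ofInjective g hg
  let ec : ↥(Set.range f)ᶜ ≃ ↥(Set.range g)ᶜ := Fintype.equivOfCardEq hc
  refine ⟨((Equiv.Set.sumCompl (Set.range f)).symm.trans
      ((ef.symm.trans eg).sumCongr ec)).trans (Equiv.Set.sumCompl (Set.range g)),
    fun i => ?_⟩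
  have h1 : (Equiv.Set.sumCompl (Set.range f)).symm (f i) = Sum.inl ⟨f i, ⟨i, rfl⟩⟩ :=
    Equiv.Set.sumCompl_symm_apply_of_mem (Set.mem_range_self i)
  have h2 : ef.symm ⟨f i, ⟨i, rfl⟩⟩ = i := by
    apply ef.injective; simp [ef, Equiv.ofInjective_apply]
  simp [Equiv.trans_apply, h1, h2, eg, Equiv.ofInjective_apply]

section MeasureLemmas

variable {E : Type*} [MeasurableSpace E] {N m : ℕ}

instance instFinEmp (Z : Fin N → E) : IsFiniteMeasure (empiricalMeasure Z) := by
  refine ⟨?_⟩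
  have h : empiricalMeasure Z Set.univ = (N : ℝ≥0∞)⁻¹ * N := by
    simp [empiricalMeasure, Measure.smul_apply, Measure.finset_sum_apply]
  rw [h]
  rcases eq_or_ne (N : ℝ≥0∞) 0 with h0 | h0
  · simp [h0]
  · rw [ENNReal.inv_mul_cancel h0 (natCast_ne_top N)]; exact one_lt_top

lemma pi_empirical (Z : Fin N → E) :
    (Measure.pi fun _ : Fin m => empiricalMeasure Z) =
      ((N : ℝ≥0∞) ^ m)⁻¹ • ∑ k : Fin m → Fin N, Measure.dirac (fun i => Z (k i)) := by
  classical
  refine Measure.pi_eq fun s hs => ?_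
  have hset : MeasurableSet (Set.univ.pi s) := MeasurableSet.univ_pi hs
  have h1 : ∀ k : Fin m → Fin N,
      Measure.dirac (fun i => Z (k i)) (Set.univ.pi s) =
        ∏ i, if Z (k i) ∈ s i then (1 : ℝ≥0∞) else 0 := by
    intro k
    rw [Measure.dirac_apply' _ hset, Set.indicator_apply, Fintype.prod_boole]
    simp [Set.mem_univ_pi]
  have h2 : ∀ i, empiricalMeasure Z (s i) =
      (N : ℝ≥0∞)⁻¹ * ∑ j, if Z j ∈ s i then (1 : ℝ≥0∞) else 0 := by
    intro i
    simp [empiricalMeasure, Measure.smul_apply, Measure.finset_sum_apply,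
      Measure.dirac_apply' _ (hs i), Set.indicator_apply]
  simp only [Measure.smul_apply, Measure.finset_sum_apply, h1, h2, smul_eq_mul]
  rw [Finset.prod_mul_distrib, Finset.prod_const, Finset.prod_univ_sum]
  simp [Fintype.piFinset_univ, ENNReal.inv_pow]

lemma measurable_coord (k : Fin m → Fin N) :
    Measurable (fun Z : Fin N → E => fun i => Z (k i)) :=
  measurable_pi_lambda _ fun i => measurable_pi_apply (k i)

lemma bind_pi_empirical (P : Measure (Fin N → E)) :
    P.bind (fun Z => Measure.pi fun _ : Fin m => empiricalMeasure Z) =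
      ((N : ℝ≥0∞) ^ m)⁻¹ • ∑ k : Fin m → Fin N, P.map (fun Z i => Z (k i)) := by
  classical
  have hind : ∀ (s : Set (Fin m → E)), MeasurableSet s → ∀ k : Fin m → Fin N,
      Measurable fun Z : Fin N → E =>
        s.indicator (1 : (Fin m → E) → ℝ≥0∞) (fun i => Z (k i)) :=
    fun s hs k => (measurable_one.indicator hs).comp (measurable_coord k)
  have hmeas : Measurable fun Z : Fin N → E =>
      ((N : ℝ≥0∞) ^ m)⁻¹ • ∑ k : Fin m → Fin N, Measure.dirac (fun i => Z (k i)) := by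
    apply Measure.measurable_measure.2
    intro s hs
    simp only [Measure.smul_apply, Measure.finset_sum_apply, smul_eq_mul,
      Measure.dirac_apply' _ hs]
    exact (Finset.measurable_sum _ fun k _ => hind s hs k).const_mul _
  ext s hs
  rw [show (fun Z : Fin N → E => Measure.pi fun _ : Fin m => empiricalMeasure Z) =
      fun Z => ((N : ℝ≥0∞) ^ m)⁻¹ • ∑ k : Fin m → Fin N, Measure.dirac (fun i => Z (k i))
      from funext fun Z => pi_empirical Z,
    Measure.bind_apply hs hmeas.aemeasurable]
  simp only [Measure.smul_apply, Measure.finset_sum_apply, smul_eq_mul,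
    Measure.dirac_apply' _ hs]
  rw [lintegral_const_mul _ (Finset.measurable_sum _ fun k _ => hind s hs k),
    lintegral_finset_sum _ fun k _ => hind s hs k]
  congr 1
  refine Finset.sum_congr rfl fun k _ => ?_
  have h : (fun Z : Fin N → E =>
        s.indicator (1 : (Fin m → E) → ℝ≥0∞) (fun i => Z (k i))) =
      fun Z => ((fun Z : Fin N → E => fun i => Z (k i)) ⁻¹' s).indicator 1 Z := by
    funext Z; simp [Set.indicator_apply, Set.mem_preimage]
  rw [h, lintegral_indicator_one ((measurable_coord k) hs),
    Measure.map_apply (measurable_coord k) hs]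

end MeasureLemmas

lemma desc_bound (N : ℕ) : ∀ m : ℕ, m ≤ N →
    (N : ℝ) ^ m - (N.descFactorial m : ℝ) ≤ (m : ℝ) * ((m : ℝ) - 1) / 2 * (N : ℝ) ^ (m - 1)
  | 0, _ => by simp
  | (m + 1), h => by
    have hm : m ≤ N := le_of_lt (Nat.lt_of_succ_le h)
    have ih := desc_bound N m hm
    have hD : (N.descFactorial m : ℝ) ≤ (N : ℝ) ^ m := by
      exact_mod_cast Nat.cast_le.2 (Nat.descFactorial_le_pow N m)
    have hcast : ((N.descFactorial (m + 1) : ℕ) : ℝ) = ((N : ℝ) - m) * N.descFactorial m := by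
      rw [Nat.descFactorial_succ, Nat.cast_mul, Nat.cast_sub hm]
    rcases Nat.eq_zero_or_pos m with rfl | hm1
    · simp [hcast]
    · have hNpow : (N : ℝ) * (N : ℝ) ^ (m - 1) = (N : ℝ) ^ m := by
        rw [← pow_succ']; congr 1; omega
      have hN0 : (0 : ℝ) ≤ N := Nat.cast_nonneg N
      have hm0 : (0 : ℝ) ≤ m := Nat.cast_nonneg m
      have hps : (N : ℝ) ^ (m + 1) = (N : ℝ) * (N : ℝ) ^ m := by rw [pow_succ]; ring
      have hr : (N : ℝ) * ((m : ℝ) * ((m : ℝ) - 1) / 2 * (N : ℝ) ^ (m - 1)) =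
          (m : ℝ) * ((m : ℝ) - 1) / 2 * (N : ℝ) ^ m := by rw [← hNpow]; ring
      have key := le_trans (mul_le_mul_of_nonneg_left ih hN0) (le_of_eq hr)
      have key2 := mul_le_mul_of_nonneg_left hD hm0
      rw [hcast]
      push_cast
      nlinarith [key, key2, hps]

lemma card_inj (m N : ℕ) [DecidablePred (Function.Injective : (Fin m → Fin N) → Prop)] :
    (Finset.univ.filter fun k : Fin m → Fin N => Function.Injective k).card =
      N.descFactorial m := by
  rw [← Fintype.card_subtype]
  rw [Fintype.card_congr (Equiv.subtypeInjectiveEquivEmbedding (Fin m) (Fin N))]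
  rw [Fintype.card_embedding_eq, Fintype.card_fin, Fintype.card_fin]

/-- For a symmetric probability measure `P_N` on `(ℝ^d)^N` and a bounded measurable
`φ_m` on `(ℝ^d)^m`, the pairing of `∫ μ_{Z_N}^{⊗m} P_N(dZ_N) − P_{N:m}` against `φ_m`
is bounded by `(m(m-1)/N) ‖φ_m‖_∞`. -/
theorem stmt_12 (d N m : ℕ) (hm : 1 ≤ m) (hmN : m ≤ N)
    (P : Measure (Fin N → EuclideanSpace ℝ (Fin d))) [IsProbabilityMeasure P]
    (hsym : ∀ σ : Equiv.Perm (Fin N), P.map (fun Z => Z ∘ σ) = P)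
    (φ : (Fin m → EuclideanSpace ℝ (Fin d)) → ℝ) (C : ℝ)
    (hφmeas : Measurable φ) (hφbdd : ∀ x, |φ x| ≤ C) :
    |(∫ x, φ x ∂(P.bind fun Z => Measure.pi fun _ : Fin m => empiricalMeasure Z)) -
        ∫ x, φ x ∂(marginal m hmN P)| ≤
      (m : ℝ) * ((m : ℝ) - 1) / N * C := by
  classical
  have hNpos : 0 < N := lt_of_lt_of_le hm hmN
  have hC0 : 0 ≤ C := le_trans (abs_nonneg _) (hφbdd (fun _ => 0))
  set I : (Fin m → Fin N) → ℝ := fun k => ∫ Z, φ (fun i => Z (k i)) ∂P with hI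
  -- boundedness of each I k
  have hIbdd : ∀ k : Fin m → Fin N, |I k| ≤ C := by
    intro k
    have h := norm_integral_le_of_norm_le_const (μ := P)
      (f := fun Z => φ (fun i => Z (k i))) (C := C)
      (Filter.Eventually.of_forall fun Z => by
        simpa [Real.norm_eq_abs] using hφbdd (fun i => Z (k i)))
    simpa [hI, Real.norm_eq_abs, measure_univ] using h
  -- integrability and the value of integrals against the pushforwards
  have hInt : ∀ k : Fin m → Fin N, Integrable φ (P.map fun Z i => Z (k i)) := by
    intro k
    haveI : IsProbabilityMeasure (P.map fun Z i => Z (k i)) :=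
      Measure.isProbabilityMeasure_map (measurable_coord k).aemeasurable
    exact (integrable_const C).mono' hφmeas.aestronglyMeasurable
      (Filter.Eventually.of_forall fun x => by
        simpa [Real.norm_eq_abs] using hφbdd x)
  have hmapI : ∀ k : Fin m → Fin N, (∫ x, φ x ∂(P.map fun Z i => Z (k i))) = I k := by
    intro k
    exact integral_map (measurable_coord k).aemeasurable hφmeas.aestronglyMeasurable
  -- the marginal integral
  have hmarg : (∫ x, φ x ∂(marginal m hmN P)) = I (Fin.castLE hmN) := by
    rw [marginal]
    exact integral_map (measurable_coord (Fin.castLE hmN)).aemeasurable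
      hφmeas.aestronglyMeasurable
  -- symmetry: injective k's give the marginal
  have hsymI : ∀ k : Fin m → Fin N, Function.Injective k → I k = I (Fin.castLE hmN) := by
    intro k hk
    obtain ⟨σ, hσ⟩ := exists_perm_extend (fun i => Fin.castLE hmN i) k
      (fun a b hab => by
        have := Fin.castLE_injective hmN hab
        exact this) hk
    have hT : Measurable fun Z : Fin N → EuclideanSpace ℝ (Fin d) => Z ∘ σ :=
      measurable_pi_lambda _ fun j => measurable_pi_apply (σ j)
    calc I k = ∫ Z, φ (fun i => Z (σ (Fin.castLE hmN i))) ∂P := by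
          simp only [hI]; congr 1; funext Z; congr 1; funext i; rw [hσ]
      _ = ∫ Z, φ (fun i => (Z ∘ σ) (Fin.castLE hmN i)) ∂P := rfl
      _ = ∫ Z, φ (fun i => Z (Fin.castLE hmN i)) ∂(P.map fun Z => Z ∘ σ) :=
          (integral_map hT.aemeasurable
            (hφmeas.comp (measurable_coord (Fin.castLE hmN))).aestronglyMeasurable).symm
      _ = I (Fin.castLE hmN) := by rw [hsym σ]
  -- rewrite the bind integral
  rw [bind_pi_empirical P, integral_smul_measure,
    integral_finset_sum_measure (fun k _ => hInt k)]
  simp only [hmapI]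
  -- set up the sum splitting
  have hsplit : ∑ k : Fin m → Fin N, I k =
      (N.descFactorial m : ℝ) * I (Fin.castLE hmN) +
        ∑ k ∈ Finset.univ.filter
          (fun k : Fin m → Fin N => ¬ Function.Injective k), I k := by
    rw [← Finset.sum_filter_add_sum_filter_not Finset.univ
      (fun k : Fin m → Fin N => Function.Injective k) I]
    congr 1
    rw [Finset.sum_congr rfl fun k hk => hsymI k (Finset.mem_filter.1 hk).2,
      Finset.sum_const, nsmul_eq_mul, card_inj]
  have hcardTc : ((Finset.univ.filter
      (fun k : Fin m → Fin N => ¬ Function.Injective k)).card : ℝ) =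
      (N : ℝ) ^ m - (N.descFactorial m : ℝ) := by
    have h1 := Finset.card_filter_add_card_filter_not (s := Finset.univ)
      (p := fun k : Fin m → Fin N => Function.Injective k)
    have h2 : (Finset.univ : Finset (Fin m → Fin N)).card = N ^ m := by
      rw [Finset.card_univ, Fintype.card_fun, Fintype.card_fin, Fintype.card_fin]
    have h3 := card_inj m N
    have h4 : (Finset.univ.filter
        (fun k : Fin m → Fin N => ¬ Function.Injective k)).card
        = N ^ m - N.descFactorial m := by omega
    rw [h4, Nat.cast_sub (Nat.descFactorial_le_pow N m)]
    push_cast; ring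
  -- bound the non-injective sum
  have hSbd : |∑ k ∈ Finset.univ.filter
      (fun k : Fin m → Fin N => ¬ Function.Injective k), I k| ≤
      ((N : ℝ) ^ m - (N.descFactorial m : ℝ)) * C := by
    refine le_trans (Finset.abs_sum_le_sum_abs _ _) ?_
    refine le_trans (Finset.sum_le_sum fun k _ => hIbdd k) ?_
    rw [Finset.sum_const, nsmul_eq_mul, hcardTc]
  -- numeric facts
  have hNR : (0 : ℝ) < N := by exact_mod_cast hNpos
  have hPm : (0 : ℝ) < (N : ℝ) ^ m := pow_pos hNR m
  have htoReal : (((N : ℝ≥0∞) ^ m)⁻¹).toReal = ((N : ℝ) ^ m)⁻¹ := by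
    simp [ENNReal.toReal_inv, ENNReal.toReal_pow]
  rw [htoReal, hmarg, hsplit]
  set r : ℝ := ((N : ℝ) ^ m)⁻¹ with hr
  have hrpos : 0 < r := inv_pos.2 hPm
  have hDle : (N.descFactorial m : ℝ) ≤ (N : ℝ) ^ m := by
    exact_mod_cast Nat.cast_le.2 (Nat.descFactorial_le_pow N m)
  have hD0 : 0 ≤ (N : ℝ) ^ m - (N.descFactorial m : ℝ) := by linarith
  have hDbd : (N : ℝ) ^ m - (N.descFactorial m : ℝ) ≤
      (m : ℝ) * ((m : ℝ) - 1) / 2 * (N : ℝ) ^ (m - 1) := desc_bound N m hmN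
  have hrN : r * (N : ℝ) ^ m = 1 := inv_mul_cancel₀ (ne_of_gt hPm)
  have hpow_split : (N : ℝ) ^ m = (N : ℝ) ^ (m - 1) * N := by
    rw [← pow_succ]; congr 1; omega
  have hrpow : r * (N : ℝ) ^ (m - 1) = (N : ℝ)⁻¹ := by
    rw [hr, hpow_split, mul_inv, mul_comm ((N : ℝ) ^ (m - 1))⁻¹ _, mul_assoc,
      inv_mul_cancel₀ (ne_of_gt (pow_pos hNR (m - 1)))]
    ring
  have hexpand : r • ((N.descFactorial m : ℝ) * I (Fin.castLE hmN) +
        ∑ k ∈ Finset.univ.filter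
          (fun k : Fin m → Fin N => ¬ Function.Injective k), I k) - I (Fin.castLE hmN) =
      (r * (N.descFactorial m : ℝ) - 1) * I (Fin.castLE hmN) +
        r * ∑ k ∈ Finset.univ.filter
          (fun k : Fin m → Fin N => ¬ Function.Injective k), I k := by
    simp only [smul_eq_mul]; ring
  rw [hexpand]
  have habs1 : |r * (N.descFactorial m : ℝ) - 1| =
      r * ((N : ℝ) ^ m - (N.descFactorial m : ℝ)) := by
    rw [abs_of_nonpos]
    · linear_combination -hrN
    · have h := mul_le_mul_of_nonneg_left hDle hrpos.le
      rw [hrN] at h; linarith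
  have hmain : |(r * (N.descFactorial m : ℝ) - 1) * I (Fin.castLE hmN) +
        r * ∑ k ∈ Finset.univ.filter
          (fun k : Fin m → Fin N => ¬ Function.Injective k), I k| ≤
      2 * (r * ((N : ℝ) ^ m - (N.descFactorial m : ℝ))) * C := by
    refine le_trans (abs_add_le _ _) ?_
    rw [abs_mul, abs_mul, abs_of_pos hrpos, habs1]
    have a1 : r * ((N : ℝ) ^ m - (N.descFactorial m : ℝ)) * |I (Fin.castLE hmN)| ≤
        r * ((N : ℝ) ^ m - (N.descFactorial m : ℝ)) * C :=
      mul_le_mul_of_nonneg_left (hIbdd _) (mul_nonneg hrpos.le hD0)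
    have a2 := mul_le_mul_of_nonneg_left hSbd hrpos.le
    linarith
  refine le_trans hmain ?_
  have hrD2 : r * ((N : ℝ) ^ m - (N.descFactorial m : ℝ)) ≤
      (m : ℝ) * ((m : ℝ) - 1) / 2 * (N : ℝ)⁻¹ := by
    refine le_trans (mul_le_mul_of_nonneg_left hDbd hrpos.le) ?_
    rw [show r * ((m : ℝ) * ((m : ℝ) - 1) / 2 * (N : ℝ) ^ (m - 1)) =
      (m : ℝ) * ((m : ℝ) - 1) / 2 * (r * (N : ℝ) ^ (m - 1)) from by ring, hrpow]
  have hmm : (0 : ℝ) ≤ (m : ℝ) * ((m : ℝ) - 1) := by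
    have h1m : (1 : ℝ) ≤ m := by exact_mod_cast hm
    nlinarith
  have hfin : 2 * (r * ((N : ℝ) ^ m - (N.descFactorial m : ℝ))) ≤
      (m : ℝ) * ((m : ℝ) - 1) / N := by
    rw [div_eq_mul_inv]; linarith
  nlinarith [mul_le_mul_of_nonneg_right hfin hC0,
    mul_nonneg (mul_nonneg hrpos.le hD0) hC0]
end

section
/- For symmetric probability measures P_M on (ℝ^d)^M and Q_N on (ℝ^d)^N with finite first moments, define Dist_{MK,1}(P_M, Q_N) = inf over couplings ρ ∈ Π(P_M, Q_N) of ∬ W₁(μ_{X_M}, μ_{Y_N}) ρ(dX_M, dY_N). If P_M(t) = T^M_t # P_M^in and Q_N(t) = T^N_t # Q_N^in are the push-forwards under the M- and N-particle flows of the Lipschitz mean-field dynamics, then Dist_{MK,1}(P_M(t), Q_N(t)) ≤ e^{2L|t|} Dist_{MK,1}(P_M^in, Q_N^in) for all t ∈ ℝ. -/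
open MeasureTheory ENNReal

/-- The Monge–Kantorovich (Wasserstein-1) distance, defined as the infimum over
couplings of the expected distance. -/
noncomputable def W1 {E : Type*} [MeasurableSpace E] [PseudoMetricSpace E]
    (μ ν : Measure E) : ℝ :=
  sInf {c | ∃ π : Measure (E × E),
    π.map Prod.fst = μ ∧ π.map Prod.snd = ν ∧ c = ∫ p, dist p.1 p.2 ∂π}

/-- The distance `Dist_{MK,1}` between symmetric probability measures on `(ℝ^d)^M`
and `(ℝ^d)^N`: the infimum over couplings `ρ` of `∬ W₁(μ_{X_M}, μ_{Y_N}) dρ`. -/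
noncomputable def DistMK {E : Type*} [MeasurableSpace E] [PseudoMetricSpace E]
    {M N : ℕ} (P : Measure (Fin M → E)) (Q : Measure (Fin N → E)) : ℝ :=
  sInf {c | ∃ ρ : Measure ((Fin M → E) × (Fin N → E)),
    ρ.map Prod.fst = P ∧ ρ.map Prod.snd = Q ∧
    c = ∫ p, W1 (empiricalMeasure p.1) (empiricalMeasure p.2) ∂ρ}



/- ### Auxiliary machinery -/

section Gronwall

variable {ι : Type*} [Fintype ι] {E : Type*} [NormedAddCommGroup E] [NormedSpace ℝ E]

private lemma gron_aux (g g' : ι → ℝ → E)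
    (hg : ∀ i t, HasDerivAt (g i) (g' i t) t) {C : ℝ} (hC : 0 ≤ C)
    (hbound : ∀ t, ∑ i, ‖g' i t‖ ≤ C * ∑ i, ‖g i t‖) {t : ℝ} (ht : 0 ≤ t) :
    ∑ i, ‖g i t‖ ≤ Real.exp (C * t) * ∑ i, ‖g i 0‖ := by
  classical
  set e := (PiLp.continuousLinearEquiv 1 ℝ (fun _ : ι => E)).symm with he
  set f : ℝ → PiLp 1 (fun _ : ι => E) := fun s => e (fun i => g i s) with hf
  have hnorm : ∀ (v : PiLp 1 (fun _ : ι => E)), ‖v‖ = ∑ i, ‖v i‖ := by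
    intro v
    rw [PiLp.norm_eq_sum (by norm_num : (0:ℝ) < (1 : ℝ≥0∞).toReal)]
    simp
  have hderiv : ∀ s, HasDerivAt f (e (fun i => g' i s)) s := by
    intro s
    exact e.toContinuousLinearMap.hasFDerivAt.comp_hasDerivAt s
      (hasDerivAt_pi.2 fun i => hg i s)
  have hcont : ContinuousOn f (Set.Icc 0 t) :=
    fun s _ => ((hderiv s).continuousAt).continuousWithinAt
  have key := norm_le_gronwallBound_of_norm_deriv_right_le (f := f)
    (f' := fun s => e (fun i => g' i s)) (δ := ‖f 0‖) (K := C) (ε := 0) (a := 0) (b := t)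
    hcont (fun s _ => (hderiv s).hasDerivWithinAt) le_rfl ?_ t (Set.mem_Icc.2 ⟨ht, le_rfl⟩)
  · rw [gronwallBound_ε0, sub_zero] at key
    calc ∑ i, ‖g i t‖ = ‖f t‖ := by rw [hnorm]; rfl
    _ ≤ ‖f 0‖ * Real.exp (C * t) := key
    _ = Real.exp (C * t) * ∑ i, ‖g i 0‖ := by rw [hnorm, mul_comm]; rfl
  · intro s _
    rw [hnorm, hnorm]
    exact (hbound s).trans (le_of_eq (add_zero _).symm)

lemma gron (g g' : ι → ℝ → E)
    (hg : ∀ i t, HasDerivAt (g i) (g' i t) t) {C : ℝ} (hC : 0 ≤ C)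
    (hbound : ∀ t, ∑ i, ‖g' i t‖ ≤ C * ∑ i, ‖g i t‖) (t : ℝ) :
    ∑ i, ‖g i t‖ ≤ Real.exp (C * |t|) * ∑ i, ‖g i 0‖ := by
  rcases le_total 0 t with ht | ht
  · rw [abs_of_nonneg ht]; exact gron_aux g g' hg hC hbound ht
  · rw [abs_of_nonpos ht]
    have := gron_aux (fun i s => g i (-s)) (fun i s => -g' i (-s))
      (fun i s => by
        have h1 : HasDerivAt (fun s : ℝ => -s) (-1) s := (hasDerivAt_id s).neg
        have := (hg i (-s)).scomp s h1
        simpa [Function.comp_def] using this)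
      hC (fun s => by simpa using hbound (-s)) (t := -t) (by linarith)
    simpa using this

end Gronwall

section Dobrushin

variable {E : Type*} [NormedAddCommGroup E] [NormedSpace ℝ E] {M N : ℕ}

/-- The central Dobrushin-type estimate: for trajectories of the `M`- and `N`-particle
systems and a fixed coupling matrix, the coupled cost grows at most like `e^{2L|t|}`. -/
lemma dobrushin (hM : 0 < M) (hN : 0 < N) {L : ℝ} (hL : 0 < L) (K : E × E → E)
    (hKlip1 : ∀ z' z₁ z₂, ‖K (z₁, z') - K (z₂, z')‖ ≤ L * ‖z₁ - z₂‖)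
    (hKlip2 : ∀ z z₁ z₂, ‖K (z, z₁) - K (z, z₂)‖ ≤ L * ‖z₁ - z₂‖)
    (x : Fin M → ℝ → E) (y : Fin N → ℝ → E)
    (hx : ∀ k t, HasDerivAt (x k) ((M : ℝ)⁻¹ • ∑ m, K (x k t, x m t)) t)
    (hy : ∀ l t, HasDerivAt (y l) ((N : ℝ)⁻¹ • ∑ n, K (y l t, y n t)) t)
    {a : Fin M → Fin N → ℝ}
    (ha : (∀ k l, 0 ≤ a k l) ∧ (∀ k, ∑ l, a k l = (M : ℝ)⁻¹)
      ∧ (∀ l, ∑ k, a k l = (N : ℝ)⁻¹)) (t : ℝ) :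
    ∑ k, ∑ l, a k l * ‖x k t - y l t‖
      ≤ Real.exp (2 * L * |t|) * ∑ k, ∑ l, a k l * ‖x k 0 - y l 0‖ := by
  have hMR : (0:ℝ) < M := by exact_mod_cast hM
  have hNR : (0:ℝ) < N := by exact_mod_cast hN
  set g : Fin M × Fin N → ℝ → E := fun i s => a i.1 i.2 • (x i.1 s - y i.2 s) with hg
  set g' : Fin M × Fin N → ℝ → E := fun i s => a i.1 i.2 •
    ((M : ℝ)⁻¹ • ∑ m, K (x i.1 s, x m s) - (N : ℝ)⁻¹ • ∑ n, K (y i.2 s, y n s)) with hg'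
  have hderiv : ∀ i t, HasDerivAt (g i) (g' i t) t := fun i s =>
    ((hx i.1 s).sub (hy i.2 s)).const_smul (a i.1 i.2)
  have hnormg : ∀ s, ∑ i : Fin M × Fin N, ‖g i s‖ = ∑ k, ∑ l, a k l * ‖x k s - y l s‖ := by
    intro s
    rw [Fintype.sum_prod_type]
    refine Finset.sum_congr rfl fun k _ => Finset.sum_congr rfl fun l _ => ?_
    rw [hg, norm_smul, Real.norm_eq_abs, abs_of_nonneg (ha.1 k l)]
  have hsuma : ∑ k, ∑ l, a k l = 1 := by
    have : ∀ k : Fin M, ∑ l, a k l = (M:ℝ)⁻¹ := ha.2.1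
    simp only [this, Finset.sum_const, Finset.card_univ, Fintype.card_fin, nsmul_eq_mul]
    field_simp
  have hbound : ∀ s, ∑ i : Fin M × Fin N, ‖g' i s‖
      ≤ (2 * L) * ∑ i : Fin M × Fin N, ‖g i s‖ := by
    intro s
    set φ := ∑ k, ∑ l, a k l * ‖x k s - y l s‖ with hφ
    have hφ0 : 0 ≤ φ :=
      Finset.sum_nonneg fun k _ => Finset.sum_nonneg fun l _ =>
        mul_nonneg (ha.1 k l) (norm_nonneg _)
    have hD : ∀ k l, ‖(M : ℝ)⁻¹ • ∑ m, K (x k s, x m s)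
        - (N : ℝ)⁻¹ • ∑ n, K (y l s, y n s)‖ ≤ L * ‖x k s - y l s‖ + L * φ := by
      intro k l
      have hA : ‖(M : ℝ)⁻¹ • ∑ m, K (x k s, x m s) - (M : ℝ)⁻¹ • ∑ m, K (y l s, x m s)‖
          ≤ L * ‖x k s - y l s‖ := by
        rw [← smul_sub, ← Finset.sum_sub_distrib, norm_smul, Real.norm_eq_abs,
          abs_of_nonneg (by positivity : (0:ℝ) ≤ (M:ℝ)⁻¹)]
        calc (M:ℝ)⁻¹ * ‖∑ m, (K (x k s, x m s) - K (y l s, x m s))‖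
            ≤ (M:ℝ)⁻¹ * ∑ m, ‖K (x k s, x m s) - K (y l s, x m s)‖ := by
              exact mul_le_mul_of_nonneg_left (norm_sum_le _ _) (by positivity)
          _ ≤ (M:ℝ)⁻¹ * ∑ _m : Fin M, L * ‖x k s - y l s‖ := by
              exact mul_le_mul_of_nonneg_left
                (Finset.sum_le_sum fun m _ => hKlip1 (x m s) (x k s) (y l s)) (by positivity)
          _ = L * ‖x k s - y l s‖ := by
              simp only [Finset.sum_const, Finset.card_univ, Fintype.card_fin, nsmul_eq_mul]
              field_simp
      have hB : ‖(M : ℝ)⁻¹ • ∑ m, K (y l s, x m s) - (N : ℝ)⁻¹ • ∑ n, K (y l s, y n s)‖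
          ≤ L * φ := by
        have e1 : (M : ℝ)⁻¹ • ∑ m, K (y l s, x m s)
            = ∑ m, ∑ n, a m n • K (y l s, x m s) := by
          rw [Finset.smul_sum]
          refine Finset.sum_congr rfl fun m _ => ?_
          rw [← ha.2.1 m, ← Finset.sum_smul]
        have e2 : (N : ℝ)⁻¹ • ∑ n, K (y l s, y n s)
            = ∑ m, ∑ n, a m n • K (y l s, y n s) := by
          rw [Finset.smul_sum, Finset.sum_comm]
          refine Finset.sum_congr rfl fun n _ => ?_
          rw [← ha.2.2 n, ← Finset.sum_smul]
        rw [e1, e2, ← Finset.sum_sub_distrib]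
        calc ‖∑ m, (∑ n, a m n • K (y l s, x m s) - ∑ n, a m n • K (y l s, y n s))‖
            ≤ ∑ m, ‖∑ n, a m n • K (y l s, x m s) - ∑ n, a m n • K (y l s, y n s)‖ :=
              norm_sum_le _ _
          _ ≤ ∑ m, ∑ n, a m n * (L * ‖x m s - y n s‖) := by
              refine Finset.sum_le_sum fun m _ => ?_
              rw [← Finset.sum_sub_distrib]
              calc ‖∑ n, (a m n • K (y l s, x m s) - a m n • K (y l s, y n s))‖
                  ≤ ∑ n, ‖a m n • K (y l s, x m s) - a m n • K (y l s, y n s)‖ :=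
                    norm_sum_le _ _
                _ ≤ ∑ n, a m n * (L * ‖x m s - y n s‖) := by
                    refine Finset.sum_le_sum fun n _ => ?_
                    rw [← smul_sub, norm_smul, Real.norm_eq_abs, abs_of_nonneg (ha.1 m n)]
                    exact mul_le_mul_of_nonneg_left (hKlip2 (y l s) (x m s) (y n s)) (ha.1 m n)
          _ = L * φ := by
              rw [hφ, Finset.mul_sum]
              refine Finset.sum_congr rfl fun m _ => ?_
              rw [Finset.mul_sum]
              refine Finset.sum_congr rfl fun n _ => ?_
              ring
      calc ‖(M : ℝ)⁻¹ • ∑ m, K (x k s, x m s) - (N : ℝ)⁻¹ • ∑ n, K (y l s, y n s)‖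
          ≤ ‖(M : ℝ)⁻¹ • ∑ m, K (x k s, x m s) - (M : ℝ)⁻¹ • ∑ m, K (y l s, x m s)‖
            + ‖(M : ℝ)⁻¹ • ∑ m, K (y l s, x m s) - (N : ℝ)⁻¹ • ∑ n, K (y l s, y n s)‖ := by
            exact norm_sub_le_norm_sub_add_norm_sub _ _ _
        _ ≤ L * ‖x k s - y l s‖ + L * φ := add_le_add hA hB
    calc ∑ i : Fin M × Fin N, ‖g' i s‖
        ≤ ∑ i : Fin M × Fin N, a i.1 i.2 * (L * ‖x i.1 s - y i.2 s‖ + L * φ) := by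
          refine Finset.sum_le_sum fun i _ => ?_
          rw [hg', norm_smul, Real.norm_eq_abs, abs_of_nonneg (ha.1 i.1 i.2)]
          exact mul_le_mul_of_nonneg_left (hD i.1 i.2) (ha.1 i.1 i.2)
      _ = L * φ + L * φ * (∑ k, ∑ l, a k l) := by
          rw [Fintype.sum_prod_type]
          have hsplit : ∀ k l, a k l * (L * ‖x k s - y l s‖ + L * φ)
              = L * (a k l * ‖x k s - y l s‖) + (L * φ) * a k l := fun k l => by ring
          simp only [hsplit, Finset.sum_add_distrib, ← Finset.mul_sum]
          try rw [← hφ]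
          try ring
      _ = (2 * L) * ∑ i : Fin M × Fin N, ‖g i s‖ := by
          rw [hsuma, hnormg s, ← hφ]
          ring
  have := gron g g' hderiv (by positivity : (0:ℝ) ≤ 2 * L) hbound t
  rw [hnormg t, hnormg 0] at this
  exact this

/-- Lipschitz estimate for the particle flow in the initial data. -/
lemma flow_lip (hM : 0 < M) {L : ℝ} (hL : 0 < L) (K : E × E → E)
    (hKlip1 : ∀ z' z₁ z₂, ‖K (z₁, z') - K (z₂, z')‖ ≤ L * ‖z₁ - z₂‖)
    (hKlip2 : ∀ z z₁ z₂, ‖K (z, z₁) - K (z, z₂)‖ ≤ L * ‖z₁ - z₂‖)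
    (x x' : Fin M → ℝ → E)
    (hx : ∀ k t, HasDerivAt (x k) ((M : ℝ)⁻¹ • ∑ m, K (x k t, x m t)) t)
    (hx' : ∀ k t, HasDerivAt (x' k) ((M : ℝ)⁻¹ • ∑ m, K (x' k t, x' m t)) t) (t : ℝ) :
    ∑ k, ‖x k t - x' k t‖ ≤ Real.exp (2 * L * |t|) * ∑ k, ‖x k 0 - x' k 0‖ := by
  have hMR : (0:ℝ) < M := by exact_mod_cast hM
  set g : Fin M → ℝ → E := fun k s => x k s - x' k s with hg
  set g' : Fin M → ℝ → E := fun k s =>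
    (M : ℝ)⁻¹ • ∑ m, K (x k s, x m s) - (M : ℝ)⁻¹ • ∑ m, K (x' k s, x' m s) with hg'
  have hderiv : ∀ k t, HasDerivAt (g k) (g' k t) t := fun k s => (hx k s).sub (hx' k s)
  have hbound : ∀ s, ∑ k, ‖g' k s‖ ≤ (2 * L) * ∑ k, ‖g k s‖ := by
    intro s
    have hterm : ∀ k, ‖g' k s‖ ≤ L * ‖g k s‖ + (M:ℝ)⁻¹ * ∑ m, L * ‖g m s‖ := by
      intro k
      simp only [hg']
      rw [← smul_sub, ← Finset.sum_sub_distrib, norm_smul, Real.norm_eq_abs,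
        abs_of_nonneg (by positivity : (0:ℝ) ≤ (M:ℝ)⁻¹)]
      calc (M:ℝ)⁻¹ * ‖∑ m, (K (x k s, x m s) - K (x' k s, x' m s))‖
          ≤ (M:ℝ)⁻¹ * ∑ m, ‖K (x k s, x m s) - K (x' k s, x' m s)‖ :=
            mul_le_mul_of_nonneg_left (norm_sum_le _ _) (by positivity)
        _ ≤ (M:ℝ)⁻¹ * ∑ m, (L * ‖x k s - x' k s‖ + L * ‖x m s - x' m s‖) := by
            refine mul_le_mul_of_nonneg_left (Finset.sum_le_sum fun m _ => ?_) (by positivity)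
            calc ‖K (x k s, x m s) - K (x' k s, x' m s)‖
                ≤ ‖K (x k s, x m s) - K (x' k s, x m s)‖
                  + ‖K (x' k s, x m s) - K (x' k s, x' m s)‖ :=
                  norm_sub_le_norm_sub_add_norm_sub _ _ _
              _ ≤ L * ‖x k s - x' k s‖ + L * ‖x m s - x' m s‖ :=
                  add_le_add (hKlip1 (x m s) (x k s) (x' k s))
                    (hKlip2 (x' k s) (x m s) (x' m s))
        _ = L * ‖g k s‖ + (M:ℝ)⁻¹ * ∑ m, L * ‖g m s‖ := by
            rw [Finset.sum_add_distrib, mul_add]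
            congr 1
            simp only [Finset.sum_const, Finset.card_univ, Fintype.card_fin, nsmul_eq_mul, hg]
            field_simp
            try ring
    calc ∑ k, ‖g' k s‖ ≤ ∑ k, (L * ‖g k s‖ + (M:ℝ)⁻¹ * ∑ m, L * ‖g m s‖) :=
          Finset.sum_le_sum fun k _ => hterm k
      _ = L * ∑ k, ‖g k s‖ + (M:ℝ) * ((M:ℝ)⁻¹ * (L * ∑ m, ‖g m s‖)) := by
          simp only [← Finset.mul_sum]
          rw [Finset.sum_add_distrib, Finset.sum_const, Finset.card_univ, Fintype.card_fin,
            nsmul_eq_mul, ← Finset.mul_sum]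
      _ = (2 * L) * ∑ k, ‖g k s‖ := by
          field_simp
          ring
  exact gron g g' hderiv (by positivity : (0:ℝ) ≤ 2 * L) hbound t

end Dobrushin


lemma integrable_dirac'' {α F : Type*} [MeasurableSpace α] [MeasurableSingletonClass α]
    [NormedAddCommGroup F] (f : α → F) (a : α) : Integrable f (Measure.dirac a) :=
  (integrable_const (f a)).congr (ae_eq_dirac f).symm

section Mat

variable {E : Type*} [MeasurableSpace E] [PseudoMetricSpace E]
  [OpensMeasurableSpace E] [MeasurableSingletonClass E] {M N : ℕ}

/-- A coupling matrix between the uniform weights `1/M` and `1/N`. -/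
def IsCoupMat (M N : ℕ) (a : Fin M → Fin N → ℝ) : Prop :=
  (∀ k l, 0 ≤ a k l) ∧ (∀ k, ∑ l, a k l = (M : ℝ)⁻¹) ∧ (∀ l, ∑ k, a k l = (N : ℝ)⁻¹)

/-- Transport cost of a matrix. -/
def matCost (X : Fin M → E) (Y : Fin N → E) (a : Fin M → Fin N → ℝ) : ℝ :=
  ∑ k, ∑ l, a k l * dist (X k) (Y l)

lemma matCost_nonneg {X : Fin M → E} {Y : Fin N → E} {a} (ha : IsCoupMat M N a) :
    0 ≤ matCost X Y a :=
  Finset.sum_nonneg fun k _ => Finset.sum_nonneg fun l _ =>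
    mul_nonneg (ha.1 k l) dist_nonneg

/-- uniform matrix is a coupling matrix -/
lemma isCoupMat_unif (hM : 0 < M) (hN : 0 < N) :
    IsCoupMat M N (fun _ _ => ((M : ℝ) * N)⁻¹) := by
  have hM' : (M : ℝ) ≠ 0 := Nat.cast_ne_zero.2 hM.ne'
  have hN' : (N : ℝ) ≠ 0 := Nat.cast_ne_zero.2 hN.ne'
  refine ⟨fun k l => by positivity, fun k => ?_, fun l => ?_⟩
  · rw [Finset.sum_const, Finset.card_univ, Fintype.card_fin, nsmul_eq_mul,
      mul_inv]; field_simp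
  · rw [Finset.sum_const, Finset.card_univ, Fintype.card_fin, nsmul_eq_mul,
      mul_inv]; field_simp

lemma map_finset_sum' {α β ι : Type*} [MeasurableSpace α] [MeasurableSpace β]
    {f : α → β} (hf : Measurable f) (s : Finset ι) (μ : ι → Measure α) :
    (∑ i ∈ s, μ i).map f = ∑ i ∈ s, (μ i).map f := by
  classical
  induction s using Finset.cons_induction with
  | empty => simp
  | cons i s hi ih => rw [Finset.sum_cons, Finset.sum_cons, Measure.map_add _ _ hf, ih]

lemma emp_apply (Z : Fin M → E) (s : Set E) :
    empiricalMeasure Z s = (M : ℝ≥0∞)⁻¹ * ∑ k, s.indicator 1 (Z k) := by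
  simp [empiricalMeasure, Measure.finset_sum_apply, Measure.dirac_apply]

/-- W1 is at most any matrix cost. -/
lemma W1_le_matCost (hM : 0 < M) (hN : 0 < N) (X : Fin M → E) (Y : Fin N → E)
    {a} (ha : IsCoupMat M N a) :
    W1 (empiricalMeasure X) (empiricalMeasure Y) ≤ matCost X Y a := by
  classical
  set π : Measure (E × E) :=
    ∑ p : Fin M × Fin N, ENNReal.ofReal (a p.1 p.2) • Measure.dirac (X p.1, Y p.2) with hπ
  have hmem : matCost X Y a ∈ {c | ∃ π : Measure (E × E),
      π.map Prod.fst = empiricalMeasure X ∧ π.map Prod.snd = empiricalMeasure Y ∧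
      c = ∫ p, dist p.1 p.2 ∂π} := by
    refine ⟨π, ?_, ?_, ?_⟩
    · rw [hπ, map_finset_sum' measurable_fst]
      simp only [Measure.map_smul, Measure.map_dirac' measurable_fst]
      rw [Fintype.sum_prod_type]
      have : ∀ k : Fin M, ∑ l : Fin N, ENNReal.ofReal (a k l) • Measure.dirac (X k)
          = ((M : ℝ≥0∞))⁻¹ • Measure.dirac (X k) := by
        intro k
        rw [← Finset.sum_smul, ← ENNReal.ofReal_sum_of_nonneg (fun l _ => ha.1 k l),
          ha.2.1 k]
        congr 1
        rw [ENNReal.ofReal_inv_of_pos (by exact_mod_cast hM), ENNReal.ofReal_natCast]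
      simp only [this]
      rw [empiricalMeasure, Finset.smul_sum]
    · rw [hπ, map_finset_sum' measurable_snd]
      simp only [Measure.map_smul, Measure.map_dirac' measurable_snd]
      rw [Fintype.sum_prod_type_right]
      have : ∀ l : Fin N, ∑ k : Fin M, ENNReal.ofReal (a k l) • Measure.dirac (Y l)
          = ((N : ℝ≥0∞))⁻¹ • Measure.dirac (Y l) := by
        intro l
        rw [← Finset.sum_smul, ← ENNReal.ofReal_sum_of_nonneg (fun k _ => ha.1 k l),
          ha.2.2 l]
        congr 1
        rw [ENNReal.ofReal_inv_of_pos (by exact_mod_cast hN), ENNReal.ofReal_natCast]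
      simp only [this]
      rw [empiricalMeasure, Finset.smul_sum]
    · rw [hπ, integral_finset_sum_measure]
      · rw [Fintype.sum_prod_type]
        refine Finset.sum_congr rfl fun k _ => Finset.sum_congr rfl fun l _ => ?_
        rw [integral_smul_measure, integral_dirac]
        simp [ENNReal.toReal_ofReal (ha.1 k l), mul_comm]
      · intro p _
        exact ((integrable_dirac'' _ _).smul_measure ofReal_ne_top)
  refine csInf_le ⟨0, fun c hc => ?_⟩ hmem
  obtain ⟨π', _, _, rfl⟩ := hc
  exact integral_nonneg fun p => dist_nonneg

end Mat

section Decomp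

variable {E : Type*} [MeasurableSpace E] [PseudoMetricSpace E]
  [OpensMeasurableSpace E] [MeasurableSingletonClass E] [DecidableEq E] {M N : ℕ}

lemma measure_eq_sum_dirac {α : Type*} [MeasurableSpace α] [MeasurableSingletonClass α]
    (μ : Measure α) (F : Finset α) (h : μ (↑F)ᶜ = 0) :
    μ = ∑ p ∈ F, μ {p} • Measure.dirac p := by
  classical
  ext s hs
  have h0 : μ (s \ ↑F) = 0 := measure_mono_null (Set.diff_subset_compl s ↑F) h
  have h1 : μ s = μ (s ∩ ↑F) := by
    rw [← measure_inter_add_diff s F.measurableSet, h0, add_zero]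
  have h2 : s ∩ ↑F = ⋃ p ∈ (F.filter (· ∈ s)), ({p} : Set α) := by
    ext x
    simp only [Set.mem_inter_iff, Set.mem_iUnion, Finset.mem_filter, Set.mem_singleton_iff,
      Finset.mem_coe]
    constructor
    · rintro ⟨hxs, hxF⟩; exact ⟨x, ⟨hxF, hxs⟩, rfl⟩
    · rintro ⟨p, ⟨hpF, hps⟩, rfl⟩; exact ⟨hps, hpF⟩
  have h3 : μ (s ∩ ↑F) = ∑ p ∈ F.filter (· ∈ s), μ {p} := by
    rw [h2, measure_biUnion_finset]
    · intro p hp q hq hpq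
      simp only [Function.onFun]
      exact Set.disjoint_singleton.2 hpq
    · exact fun p _ => measurableSet_singleton p
  rw [h1, h3, Measure.finset_sum_apply]
  rw [Finset.sum_filter]
  refine Finset.sum_congr rfl fun p _ => ?_
  by_cases hps : p ∈ s <;>
    simp [hps, Measure.dirac_apply' p hs, Set.indicator_apply]

lemma sum_fiber_div {α β : Type*} [Fintype α] [DecidableEq β] (Z : α → β) (f : β → ℝ) :
    ∑ i, f (Z i) / ((Finset.univ.filter (fun j => Z j = Z i)).card : ℝ)
      = ∑ y ∈ Finset.univ.image Z, f y := by
  rw [← Finset.sum_fiberwise_of_maps_to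
    (fun i _ => Finset.mem_image_of_mem Z (Finset.mem_univ i))
    (fun i => f (Z i) / ((Finset.univ.filter (fun j => Z j = Z i)).card : ℝ))]
  refine Finset.sum_congr rfl fun y hy => ?_
  have hcongr : ∀ i ∈ Finset.univ.filter (fun i => Z i = y),
      f (Z i) / ((Finset.univ.filter (fun j => Z j = Z i)).card : ℝ)
        = f y / ((Finset.univ.filter (fun j => Z j = y)).card : ℝ) := by
    intro i hi
    rw [Finset.mem_filter] at hi
    rw [hi.2]
  rw [Finset.sum_congr rfl hcongr, Finset.sum_const]
  obtain ⟨i, _, rfl⟩ := Finset.mem_image.1 hy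
  have hpos : 0 < (Finset.univ.filter (fun j => Z j = Z i)).card :=
    Finset.card_pos.2 ⟨i, Finset.mem_filter.2 ⟨Finset.mem_univ i, rfl⟩⟩
  rw [nsmul_eq_mul]
  field_simp

lemma exists_coupMat (hM : 0 < M) (hN : 0 < N) (X : Fin M → E) (Y : Fin N → E)
    (π : Measure (E × E)) (h1 : π.map Prod.fst = empiricalMeasure X)
    (h2 : π.map Prod.snd = empiricalMeasure Y) :
    ∃ a, IsCoupMat M N a ∧ matCost X Y a ≤ ∫ p, dist p.1 p.2 ∂π := by
  set S : Finset E := Finset.univ.image X with hS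
  set T : Finset E := Finset.univ.image Y with hT
  set F : Finset (E × E) := S ×ˢ T with hF
  set mk : Fin M → ℝ := fun k => ((Finset.univ.filter (fun j => X j = X k)).card : ℝ) with hmk
  set nl : Fin N → ℝ := fun l => ((Finset.univ.filter (fun j => Y j = Y l)).card : ℝ) with hnl
  have hmkpos : ∀ k, 0 < mk k := fun k => by
    have : 0 < (Finset.univ.filter (fun j => X j = X k)).card :=
      Finset.card_pos.2 ⟨k, Finset.mem_filter.2 ⟨Finset.mem_univ k, rfl⟩⟩
    simp only [hmk]
    exact_mod_cast this
  have hnlpos : ∀ l, 0 < nl l := fun l => by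
    have : 0 < (Finset.univ.filter (fun j => Y j = Y l)).card :=
      Finset.card_pos.2 ⟨l, Finset.mem_filter.2 ⟨Finset.mem_univ l, rfl⟩⟩
    simp only [hnl]
    exact_mod_cast this
  have hMne : ((M : ℝ≥0∞)) ≠ 0 := by exact_mod_cast Nat.cast_ne_zero.2 hM.ne'
  have hNne : ((N : ℝ≥0∞)) ≠ 0 := by exact_mod_cast Nat.cast_ne_zero.2 hN.ne'
  -- π is a probability measure
  have hπprob : IsProbabilityMeasure π := by
    constructor
    have := congrArg (fun μ : Measure E => μ Set.univ) h1
    simp only [Measure.map_apply measurable_fst MeasurableSet.univ, Set.preimage_univ] at this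
    rw [this, emp_apply]
    simp [ENNReal.inv_mul_cancel hMne (by simp : (M:ℝ≥0∞) ≠ ⊤)]
  -- π gives no mass outside F
  have hSnull : π (Prod.fst ⁻¹' (↑S)ᶜ) = 0 := by
    rw [← Measure.map_apply measurable_fst S.measurableSet.compl, h1, emp_apply]
    have : ∀ k, ((↑S)ᶜ : Set E).indicator (1 : E → ℝ≥0∞) (X k) = 0 := by
      intro k
      simp [Set.indicator_apply, hS, Finset.mem_image.2 ⟨k, Finset.mem_univ k, rfl⟩]
    simp [this]
  have hTnull : π (Prod.snd ⁻¹' (↑T)ᶜ) = 0 := by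
    rw [← Measure.map_apply measurable_snd T.measurableSet.compl, h2, emp_apply]
    have : ∀ l, ((↑T)ᶜ : Set E).indicator (1 : E → ℝ≥0∞) (Y l) = 0 := by
      intro l
      simp [Set.indicator_apply, hT, Finset.mem_image.2 ⟨l, Finset.mem_univ l, rfl⟩]
    simp [this]
  have hFc : π (↑F)ᶜ = 0 := by
    have hsub : (↑F : Set (E × E))ᶜ ⊆ (Prod.fst ⁻¹' (↑S)ᶜ) ∪ (Prod.snd ⁻¹' (↑T)ᶜ) := by
      intro p hp
      simp only [Set.mem_compl_iff, Finset.coe_product, Set.mem_prod, not_and_or, hF] at hp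
      simpa using hp
    exact measure_mono_null hsub (measure_union_null hSnull hTnull)
  -- marginal masses of vertical/horizontal strips
  have hstripX : ∀ k, π ({X k} ×ˢ (Set.univ : Set E)) = (M : ℝ≥0∞)⁻¹ * ENNReal.ofReal (mk k) := by
    intro k
    have hpre : ({X k} : Set E) ×ˢ (Set.univ : Set E) = Prod.fst ⁻¹' {X k} := by
      ext p
      constructor
      · rintro ⟨h, -⟩; exact h
      · intro h; exact ⟨h, trivial⟩
    rw [hpre, ← Measure.map_apply measurable_fst (measurableSet_singleton _), h1, emp_apply]
    congr 1
    rw [hmk]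
    have : ∀ j, ({X k} : Set E).indicator (1 : E → ℝ≥0∞) (X j)
        = if X j = X k then 1 else 0 := by
      intro j; simp [Set.indicator_apply]
    simp only [this]
    rw [Finset.sum_boole]
    simp
  have hstripY : ∀ l, π ((Set.univ : Set E) ×ˢ {Y l}) = (N : ℝ≥0∞)⁻¹ * ENNReal.ofReal (nl l) := by
    intro l
    have hpre : (Set.univ : Set E) ×ˢ ({Y l} : Set E) = Prod.snd ⁻¹' {Y l} := by
      ext p
      constructor
      · rintro ⟨-, h⟩; exact h
      · intro h; exact ⟨trivial, h⟩
    rw [hpre, ← Measure.map_apply measurable_snd (measurableSet_singleton _), h2, emp_apply]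
    congr 1
    rw [hnl]
    have : ∀ j, ({Y l} : Set E).indicator (1 : E → ℝ≥0∞) (Y j)
        = if Y j = Y l then 1 else 0 := by
      intro j; simp [Set.indicator_apply]
    simp only [this]
    rw [Finset.sum_boole]
    simp
  -- mass of the slice {X k} ×ˢ T
  have hsliceX : ∀ k, ∑ y ∈ T, (π ({(X k, y)} : Set (E × E))).toReal
      = ((M : ℝ)⁻¹) * mk k := by
    intro k
    rw [← ENNReal.toReal_sum (fun y _ => measure_ne_top π _)]
    have hb : ∑ y ∈ T, π ({(X k, y)} : Set (E × E)) = π ({X k} ×ˢ (↑T : Set E)) := by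
      rw [← measure_biUnion_finset]
      · congr 1
        ext p
        simp only [Set.mem_iUnion, Set.mem_singleton_iff, Set.mem_prod, Finset.mem_coe]
        constructor
        · rintro ⟨y, hy, rfl⟩; exact ⟨rfl, hy⟩
        · rintro ⟨h1', h2'⟩
          exact ⟨p.2, h2', by rw [← h1']⟩
      · intro y hy z hz hyz
        simp only [Function.onFun]
        simp [Prod.ext_iff, hyz]
      · exact fun y _ => measurableSet_singleton _
    have hc : π ({X k} ×ˢ (↑T : Set E)) = π ({X k} ×ˢ (Set.univ : Set E)) := by
      refine le_antisymm (measure_mono (Set.prod_mono le_rfl (Set.subset_univ _))) ?_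
      have : ({X k} : Set E) ×ˢ (Set.univ : Set E)
          ⊆ ({X k} ×ˢ (↑T : Set E)) ∪ (Prod.snd ⁻¹' (↑T)ᶜ) := by
        rintro ⟨x, y⟩ ⟨hx, -⟩
        by_cases hy : y ∈ (↑T : Set E)
        · exact Or.inl ⟨hx, hy⟩
        · exact Or.inr hy
      calc π (({X k} : Set E) ×ˢ (Set.univ : Set E))
          ≤ π (({X k} ×ˢ (↑T : Set E)) ∪ (Prod.snd ⁻¹' (↑T)ᶜ)) := measure_mono this
        _ ≤ π ({X k} ×ˢ (↑T : Set E)) + π (Prod.snd ⁻¹' (↑T)ᶜ) := measure_union_le _ _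
        _ = π ({X k} ×ˢ (↑T : Set E)) := by rw [hTnull, add_zero]
    rw [hb, hc, hstripX k, ENNReal.toReal_mul, ENNReal.toReal_ofReal (hmkpos k).le]
    congr 1
    rw [ENNReal.toReal_inv]
    simp
  have hsliceY : ∀ l, ∑ x ∈ S, (π ({(x, Y l)} : Set (E × E))).toReal
      = ((N : ℝ)⁻¹) * nl l := by
    intro l
    rw [← ENNReal.toReal_sum (fun x _ => measure_ne_top π _)]
    have hb : ∑ x ∈ S, π ({(x, Y l)} : Set (E × E)) = π ((↑S : Set E) ×ˢ {Y l}) := by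
      rw [← measure_biUnion_finset]
      · congr 1
        ext p
        simp only [Set.mem_iUnion, Set.mem_singleton_iff, Set.mem_prod, Finset.mem_coe]
        constructor
        · rintro ⟨x, hx, rfl⟩; exact ⟨hx, rfl⟩
        · rintro ⟨h1', h2'⟩
          exact ⟨p.1, h1', by rw [← h2']⟩
      · intro x hx z hz hxz
        simp only [Function.onFun]
        simp [Prod.ext_iff, hxz]
      · exact fun x _ => measurableSet_singleton _
    have hc : π ((↑S : Set E) ×ˢ {Y l}) = π ((Set.univ : Set E) ×ˢ {Y l}) := by
      refine le_antisymm (measure_mono (Set.prod_mono (Set.subset_univ _) le_rfl)) ?_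
      have : (Set.univ : Set E) ×ˢ ({Y l} : Set E)
          ⊆ ((↑S : Set E) ×ˢ {Y l}) ∪ (Prod.fst ⁻¹' (↑S)ᶜ) := by
        rintro ⟨x, y⟩ ⟨-, hy⟩
        by_cases hx : x ∈ (↑S : Set E)
        · exact Or.inl ⟨hx, hy⟩
        · exact Or.inr hx
      calc π ((Set.univ : Set E) ×ˢ ({Y l} : Set E))
          ≤ π (((↑S : Set E) ×ˢ {Y l}) ∪ (Prod.fst ⁻¹' (↑S)ᶜ)) := measure_mono this
        _ ≤ π ((↑S : Set E) ×ˢ {Y l}) + π (Prod.fst ⁻¹' (↑S)ᶜ) := measure_union_le _ _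
        _ = π ((↑S : Set E) ×ˢ {Y l}) := by rw [hSnull, add_zero]
    rw [hb, hc, hstripY l, ENNReal.toReal_mul, ENNReal.toReal_ofReal (hnlpos l).le]
    congr 1
    rw [ENNReal.toReal_inv]
    simp
  -- the coupling matrix
  refine ⟨fun k l => (π ({(X k, Y l)} : Set (E × E))).toReal / nl l / mk k, ⟨?_, ?_, ?_⟩, ?_⟩
  · intro k l
    have := ENNReal.toReal_nonneg (a := π ({(X k, Y l)} : Set (E × E)))
    positivity
  · intro k
    have hA := sum_fiber_div Y (fun y => (π ({(X k, y)} : Set (E × E))).toReal)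
    simp only [hnl]
    rw [← Finset.sum_div, hA, ← hT, hsliceX k, mul_div_assoc,
      div_self (by simpa [hmk] using (hmkpos k).ne' : mk k ≠ 0), mul_one]
  · intro l
    have hswap : ∀ k, (π ({(X k, Y l)} : Set (E × E))).toReal / nl l / mk k
        = (π ({(X k, Y l)} : Set (E × E))).toReal / mk k / nl l := fun k =>
      div_right_comm _ _ _
    simp only [hswap]
    have hA := sum_fiber_div X (fun x => (π ({(x, Y l)} : Set (E × E))).toReal)
    simp only [hmk]
    rw [← Finset.sum_div, hA, ← hS, hsliceY l, mul_div_assoc,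
      div_self (by simpa [hnl] using (hnlpos l).ne' : nl l ≠ 0), mul_one]
  · refine le_of_eq ?_
    have hint : ∫ p, dist p.1 p.2 ∂π
        = ∑ x ∈ S, ∑ y ∈ T, (π ({(x, y)} : Set (E × E))).toReal * dist x y := by
      conv_lhs => rw [measure_eq_sum_dirac π F hFc]
      rw [integral_finset_sum_measure
        (fun p _ => (integrable_dirac'' _ _).smul_measure (measure_ne_top π _))]
      rw [hF, Finset.sum_product]
      refine Finset.sum_congr rfl fun x hx => Finset.sum_congr rfl fun y hy => ?_
      rw [integral_smul_measure, integral_dirac]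
      simp [mul_comm]
    rw [hint, matCost]
    have hterm : ∀ k l, (π ({(X k, Y l)} : Set (E × E))).toReal / nl l / mk k
          * dist (X k) (Y l)
        = ((π ({(X k, Y l)} : Set (E × E))).toReal * dist (X k) (Y l)) / nl l / mk k :=
      fun k l => by ring
    simp only [hterm]
    have hinner : ∀ k, ∑ l, ((π ({(X k, Y l)} : Set (E × E))).toReal
          * dist (X k) (Y l)) / nl l / mk k
        = (∑ y ∈ T, (π ({(X k, y)} : Set (E × E))).toReal * dist (X k) y) / mk k := by
      intro k
      have hA := sum_fiber_div Y (fun y => (π ({(X k, y)} : Set (E × E))).toReal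
        * dist (X k) y)
      simp only [hnl]
      rw [← Finset.sum_div, hA, ← hT]
    simp only [hinner]
    have hA := sum_fiber_div X
      (fun x => ∑ y ∈ T, (π ({(x, y)} : Set (E × E))).toReal * dist x y)
    simp only [hmk]
    rw [hA, ← hS]

end Decomp

section MW

variable {E : Type*} [MeasurableSpace E] [PseudoMetricSpace E]
  [OpensMeasurableSpace E] [MeasurableSingletonClass E] {M N : ℕ}

/-- The infimum of transport costs over coupling matrices. -/
noncomputable def MW (X : Fin M → E) (Y : Fin N → E) : ℝ :=
  sInf {c | ∃ a, IsCoupMat M N a ∧ c = matCost X Y a}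

lemma MW_set_nonempty (hM : 0 < M) (hN : 0 < N) (X : Fin M → E) (Y : Fin N → E) :
    {c | ∃ a, IsCoupMat M N a ∧ c = matCost X Y a}.Nonempty :=
  ⟨_, _, isCoupMat_unif hM hN, rfl⟩

lemma MW_bddBelow (X : Fin M → E) (Y : Fin N → E) :
    BddBelow {c | ∃ a, IsCoupMat M N a ∧ c = matCost X Y a} :=
  ⟨0, by rintro c ⟨a, ha, rfl⟩; exact matCost_nonneg ha⟩

lemma MW_nonneg (X : Fin M → E) (Y : Fin N → E) : 0 ≤ MW X Y :=
  Real.sInf_nonneg (by rintro c ⟨a, ha, rfl⟩; exact matCost_nonneg ha)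

lemma MW_le_matCost (X : Fin M → E) (Y : Fin N → E) {a} (ha : IsCoupMat M N a) :
    MW X Y ≤ matCost X Y a :=
  csInf_le (MW_bddBelow X Y) ⟨a, ha, rfl⟩

lemma le_MW (hM : 0 < M) (hN : 0 < N) (X : Fin M → E) (Y : Fin N → E) {c : ℝ}
    (h : ∀ a, IsCoupMat M N a → c ≤ matCost X Y a) : c ≤ MW X Y :=
  le_csInf (MW_set_nonempty hM hN X Y) (by rintro b ⟨a, ha, rfl⟩; exact h a ha)

lemma emp_prob (hM : 0 < M) (Z : Fin M → E) : IsProbabilityMeasure (empiricalMeasure Z) := by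
  constructor
  rw [emp_apply]
  have : ∀ k : Fin M, (Set.univ : Set E).indicator (1 : E → ℝ≥0∞) (Z k) = 1 := by simp
  simp only [this, Finset.sum_const, Finset.card_univ, Fintype.card_fin, nsmul_eq_mul, mul_one]
  exact ENNReal.inv_mul_cancel (by exact_mod_cast Nat.cast_ne_zero.2 hM.ne') (by simp)

/-- `W1` between empirical measures equals the matrix infimum. -/
lemma W1_emp_eq_MW [DecidableEq E] (hM : 0 < M) (hN : 0 < N)
    (X : Fin M → E) (Y : Fin N → E) :
    W1 (empiricalMeasure X) (empiricalMeasure Y) = MW X Y := by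
  refine le_antisymm ?_ ?_
  · exact le_csInf (MW_set_nonempty hM hN X Y)
      (by rintro c ⟨a, ha, rfl⟩; exact W1_le_matCost hM hN X Y ha)
  · have hPX := emp_prob hM X
    have hPY := emp_prob hN Y
    have hne : {c | ∃ π : Measure (E × E), π.map Prod.fst = empiricalMeasure X ∧
        π.map Prod.snd = empiricalMeasure Y ∧ c = ∫ p, dist p.1 p.2 ∂π}.Nonempty := by
      refine ⟨_, (empiricalMeasure X).prod (empiricalMeasure Y), ?_, ?_, rfl⟩
      · rw [Measure.map_fst_prod]; simp
      · rw [Measure.map_snd_prod]; simp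
    refine le_csInf hne ?_
    rintro c ⟨π, h1, h2, rfl⟩
    obtain ⟨a, ha, hle⟩ := exists_coupMat hM hN X Y π h1 h2
    exact (MW_le_matCost X Y ha).trans hle

lemma MW_diff_le (hM : 0 < M) (hN : 0 < N) (X X' : Fin M → E) (Y Y' : Fin N → E) :
    MW X Y ≤ MW X' Y' + ((M : ℝ)⁻¹ * ∑ k, dist (X k) (X' k)
      + (N : ℝ)⁻¹ * ∑ l, dist (Y l) (Y' l)) := by
  set D := (M : ℝ)⁻¹ * ∑ k, dist (X k) (X' k) + (N : ℝ)⁻¹ * ∑ l, dist (Y l) (Y' l) with hD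
  have key : ∀ a, IsCoupMat M N a → MW X Y - D ≤ matCost X' Y' a := by
    intro a ha
    have h1 : matCost X Y a ≤ matCost X' Y' a + D := by
      have hterm : ∀ k l, a k l * dist (X k) (Y l)
          ≤ a k l * dist (X' k) (Y' l) + a k l * dist (X k) (X' k)
            + a k l * dist (Y l) (Y' l) := by
        intro k l
        rw [← mul_add, ← mul_add]
        refine mul_le_mul_of_nonneg_left ?_ (ha.1 k l)
        calc dist (X k) (Y l) ≤ dist (X k) (X' k) + dist (X' k) (Y' l) + dist (Y' l) (Y l) :=
              dist_triangle4 _ _ _ _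
          _ = dist (X' k) (Y' l) + dist (X k) (X' k) + dist (Y l) (Y' l) := by
              rw [dist_comm (Y' l) (Y l)]; ring
      have hsum2 : ∑ k, ∑ l, a k l * dist (X k) (X' k)
          = (M : ℝ)⁻¹ * ∑ k, dist (X k) (X' k) := by
        rw [Finset.mul_sum]
        refine Finset.sum_congr rfl fun k _ => ?_
        rw [← Finset.sum_mul, ha.2.1 k]
      have hsum3 : ∑ k, ∑ l, a k l * dist (Y l) (Y' l)
          = (N : ℝ)⁻¹ * ∑ l, dist (Y l) (Y' l) := by
        rw [Finset.sum_comm, Finset.mul_sum]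
        refine Finset.sum_congr rfl fun l _ => ?_
        rw [← Finset.sum_mul, ha.2.2 l]
      calc matCost X Y a ≤ ∑ k, ∑ l, (a k l * dist (X' k) (Y' l)
            + a k l * dist (X k) (X' k) + a k l * dist (Y l) (Y' l)) := by
            refine Finset.sum_le_sum fun k _ => Finset.sum_le_sum fun l _ => hterm k l
        _ = matCost X' Y' a + ∑ k, ∑ l, a k l * dist (X k) (X' k)
            + ∑ k, ∑ l, a k l * dist (Y l) (Y' l) := by
            simp only [Finset.sum_add_distrib]; rfl
        _ = matCost X' Y' a + D := by rw [hsum2, hsum3, hD]; ring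
    have := (MW_le_matCost X Y ha).trans h1
    linarith
  have : MW X Y - D ≤ MW X' Y' := le_MW hM hN X' Y' key
  linarith

lemma MW_cont (hM : 0 < M) (hN : 0 < N) :
    Continuous (fun p : (Fin M → E) × (Fin N → E) => MW p.1 p.2) := by
  have hMpos : (0:ℝ) < M := by exact_mod_cast hM
  have hNpos : (0:ℝ) < N := by exact_mod_cast hN
  refine (LipschitzWith.of_dist_le_mul (K := 2) fun p q => ?_).continuous
  have hbound : ∀ p q : (Fin M → E) × (Fin N → E),
      (M : ℝ)⁻¹ * ∑ k, dist (p.1 k) (q.1 k) + (N : ℝ)⁻¹ * ∑ l, dist (p.2 l) (q.2 l)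
        ≤ 2 * dist p q := by
    intro p q
    have h1 : ∑ k, dist (p.1 k) (q.1 k) ≤ (M:ℝ) * dist p q := by
      calc ∑ k, dist (p.1 k) (q.1 k) ≤ ∑ _k : Fin M, dist p q :=
            Finset.sum_le_sum fun k _ =>
              (dist_le_pi_dist p.1 q.1 k).trans (by rw [Prod.dist_eq]; exact le_max_left _ _)
        _ = (M:ℝ) * dist p q := by simp [mul_comm]
    have h2 : ∑ l, dist (p.2 l) (q.2 l) ≤ (N:ℝ) * dist p q := by
      calc ∑ l, dist (p.2 l) (q.2 l) ≤ ∑ _l : Fin N, dist p q :=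
            Finset.sum_le_sum fun l _ =>
              (dist_le_pi_dist p.2 q.2 l).trans (by rw [Prod.dist_eq]; exact le_max_right _ _)
        _ = (N:ℝ) * dist p q := by simp [mul_comm]
    have e1 : (M : ℝ)⁻¹ * ∑ k, dist (p.1 k) (q.1 k) ≤ dist p q := by
      rw [inv_mul_le_iff₀ hMpos]
      simpa [mul_comm] using h1
    have e2 : (N : ℝ)⁻¹ * ∑ l, dist (p.2 l) (q.2 l) ≤ dist p q := by
      rw [inv_mul_le_iff₀ hNpos]
      simpa [mul_comm] using h2
    linarith
  have hub := MW_diff_le hM hN p.1 q.1 p.2 q.2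
  have hlb := MW_diff_le hM hN q.1 p.1 q.2 p.2
  rw [Real.dist_eq, abs_sub_le_iff]
  have hcast : ((2 : NNReal) : ℝ) = 2 := by norm_num
  have hb1 := hbound p q
  have hb2 := hbound q p
  have hqp : dist q p = dist p q := dist_comm q p
  rw [hqp] at hb2
  constructor
  · rw [hcast]; linarith
  · rw [hcast]; linarith

end MW


/-- Uniform-in-the-number-of-particles stability of the BBGKY hierarchy:
`Dist_{MK,1}(P_M(t), Q_N(t)) ≤ e^{2L|t|} Dist_{MK,1}(P_M^in, Q_N^in)`. -/
theorem stmt_15 (d M N : ℕ) (hM : 0 < M) (hN : 0 < N) (L : ℝ) (hL : 0 < L)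
    (K : EuclideanSpace ℝ (Fin d) × EuclideanSpace ℝ (Fin d) → EuclideanSpace ℝ (Fin d))
    (hKcont : Continuous K)
    (hKanti : ∀ z z', K (z, z') + K (z', z) = 0)
    (hKlip1 : ∀ z' z₁ z₂, ‖K (z₁, z') - K (z₂, z')‖ ≤ L * ‖z₁ - z₂‖)
    (hKlip2 : ∀ z z₁ z₂, ‖K (z, z₁) - K (z, z₂)‖ ≤ L * ‖z₁ - z₂‖)
    -- the `M`- and `N`-particle flows
    (TM : ℝ → (Fin M → EuclideanSpace ℝ (Fin d)) → (Fin M → EuclideanSpace ℝ (Fin d)))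
    (TN : ℝ → (Fin N → EuclideanSpace ℝ (Fin d)) → (Fin N → EuclideanSpace ℝ (Fin d)))
    (hTM0 : ∀ X, TM 0 X = X) (hTN0 : ∀ Y, TN 0 Y = Y)
    (hODEM : ∀ X k t, HasDerivAt (fun s => TM s X k)
      ((M : ℝ)⁻¹ • ∑ l, K (TM t X k, TM t X l)) t)
    (hODEN : ∀ Y k t, HasDerivAt (fun s => TN s Y k)
      ((N : ℝ)⁻¹ • ∑ l, K (TN t Y k, TN t Y l)) t)
    -- symmetric initial data with finite first moments
    (Pin : Measure (Fin M → EuclideanSpace ℝ (Fin d))) [IsProbabilityMeasure Pin]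
    (Qin : Measure (Fin N → EuclideanSpace ℝ (Fin d))) [IsProbabilityMeasure Qin]
    (hPsym : ∀ σ : Equiv.Perm (Fin M), Pin.map (fun X => X ∘ σ) = Pin)
    (hQsym : ∀ σ : Equiv.Perm (Fin N), Qin.map (fun Y => Y ∘ σ) = Qin)
    (hPmom : Integrable (fun X : Fin M → EuclideanSpace ℝ (Fin d) => ∑ k, ‖X k‖) Pin)
    (hQmom : Integrable (fun Y : Fin N → EuclideanSpace ℝ (Fin d) => ∑ k, ‖Y k‖) Qin) :
    ∀ t : ℝ, DistMK (Pin.map (TM t)) (Qin.map (TN t)) ≤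
      Real.exp (2 * L * |t|) * DistMK Pin Qin := by
  classical
  intro t
  haveI : BorelSpace ((Fin M → EuclideanSpace ℝ (Fin d)) × (Fin N → EuclideanSpace ℝ (Fin d))) :=
    Prod.borelSpace
  have hexp : (0:ℝ) < Real.exp (2 * L * |t|) := Real.exp_pos _
  have hMR : (0:ℝ) < M := by exact_mod_cast hM
  have hNR : (0:ℝ) < N := by exact_mod_cast hN
  -- the integrand
  set g : (Fin M → EuclideanSpace ℝ (Fin d)) × (Fin N → EuclideanSpace ℝ (Fin d)) → ℝ :=
    fun p => W1 (empiricalMeasure p.1) (empiricalMeasure p.2) with hgdef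
  have hgMW : ∀ p, g p = MW p.1 p.2 := fun p => W1_emp_eq_MW hM hN p.1 p.2
  have hgcont : Continuous g := by
    have h := MW_cont (E := EuclideanSpace ℝ (Fin d)) (M := M) (N := N) hM hN
    have : g = fun p => MW p.1 p.2 := funext hgMW
    rw [this]; exact h
  have hgnonneg : ∀ p, 0 ≤ g p := fun p => by rw [hgMW]; exact MW_nonneg _ _
  -- continuity of the flows
  have flowcont : ∀ (M' : ℕ), 0 < M' →
      ∀ (T' : ℝ → (Fin M' → EuclideanSpace ℝ (Fin d)) → (Fin M' → EuclideanSpace ℝ (Fin d))),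
      (∀ X, T' 0 X = X) →
      (∀ X k t, HasDerivAt (fun s => T' s X k)
        ((M' : ℝ)⁻¹ • ∑ l, K (T' t X k, T' t X l)) t) →
      Continuous (T' t) := by
    intro M' hM' T' hT0 hODE
    have hlip : ∀ X X', ∑ k, ‖T' t X k - T' t X' k‖
        ≤ Real.exp (2 * L * |t|) * ∑ k, ‖X k - X' k‖ := by
      intro X X'
      have := flow_lip hM' hL K hKlip1 hKlip2 (fun k s => T' s X k) (fun k s => T' s X' k)
        (fun k s => hODE X k s) (fun k s => hODE X' k s) t
      simpa [hT0] using this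
    have hM'R : (0:ℝ) < M' := by exact_mod_cast hM'
    refine (LipschitzWith.of_dist_le_mul
      (K := (Real.exp (2 * L * |t|) * M').toNNReal) (fun X X' => ?_)).continuous
    rw [Real.coe_toNNReal _ (by positivity)]
    rw [dist_pi_le_iff (by positivity)]
    intro k
    calc dist (T' t X k) (T' t X' k) = ‖T' t X k - T' t X' k‖ := dist_eq_norm _ _
      _ ≤ ∑ j, ‖T' t X j - T' t X' j‖ :=
          Finset.single_le_sum (f := fun j => ‖T' t X j - T' t X' j‖)
            (fun j _ => norm_nonneg _) (Finset.mem_univ k)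
      _ ≤ Real.exp (2 * L * |t|) * ∑ j, ‖X j - X' j‖ := hlip X X'
      _ ≤ Real.exp (2 * L * |t|) * ∑ _j : Fin M', dist X X' := by
          refine mul_le_mul_of_nonneg_left (Finset.sum_le_sum fun j _ => ?_) hexp.le
          rw [← dist_eq_norm]
          exact dist_le_pi_dist X X' j
      _ = Real.exp (2 * L * |t|) * ↑M' * dist X X' := by
          rw [Finset.sum_const, Finset.card_univ, Fintype.card_fin, nsmul_eq_mul]
          ring
  have hTMcont : Continuous (TM t) := flowcont M hM TM hTM0 hODEM
  have hTNcont : Continuous (TN t) := flowcont N hN TN hTN0 hODEN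
  set F : (Fin M → EuclideanSpace ℝ (Fin d)) × (Fin N → EuclideanSpace ℝ (Fin d)) →
      (Fin M → EuclideanSpace ℝ (Fin d)) × (Fin N → EuclideanSpace ℝ (Fin d)) :=
    fun p => (TM t p.1, TN t p.2) with hFdef
  have hFcont : Continuous F := (hTMcont.comp continuous_fst).prodMk
    (hTNcont.comp continuous_snd)
  -- pointwise Dobrushin estimate
  have hgF : ∀ p, g (F p) ≤ Real.exp (2 * L * |t|) * g p := by
    intro p
    rw [hgMW, hgMW]
    have hED : ∀ a, IsCoupMat M N a → MW (F p).1 (F p).2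
        ≤ Real.exp (2 * L * |t|) * matCost p.1 p.2 a := by
      intro a ha
      refine (MW_le_matCost _ _ ha).trans ?_
      have hdob := dobrushin hM hN hL K hKlip1 hKlip2
        (fun k s => TM s p.1 k) (fun l s => TN s p.2 l)
        (fun k s => hODEM p.1 k s) (fun l s => hODEN p.2 l s) ha t
      have hcost1 : matCost (F p).1 (F p).2 a
          = ∑ k, ∑ l, a k l * ‖TM t p.1 k - TN t p.2 l‖ := by
        refine Finset.sum_congr rfl fun k _ => Finset.sum_congr rfl fun l _ => ?_
        rw [dist_eq_norm]
      have hcost0 : matCost p.1 p.2 a = ∑ k, ∑ l, a k l * ‖TM 0 p.1 k - TN 0 p.2 l‖ := by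
        refine Finset.sum_congr rfl fun k _ => Finset.sum_congr rfl fun l _ => ?_
        rw [dist_eq_norm, hTM0, hTN0]
      rw [hcost1, hcost0]
      exact hdob
    have h1 : (Real.exp (2 * L * |t|))⁻¹ * MW (F p).1 (F p).2 ≤ MW p.1 p.2 :=
      le_MW hM hN p.1 p.2 (fun a ha => by
        rw [inv_mul_le_iff₀ hexp]; exact hED a ha)
    exact (inv_mul_le_iff₀ hexp).1 h1
  -- linear bound on g
  have hgbound : ∀ p, g p ≤ (M:ℝ)⁻¹ * ∑ k, ‖p.1 k‖ + (N:ℝ)⁻¹ * ∑ l, ‖p.2 l‖ := by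
    intro p
    rw [hgMW]
    refine (MW_le_matCost p.1 p.2 (isCoupMat_unif hM hN)).trans ?_
    calc matCost p.1 p.2 (fun _ _ => ((M:ℝ) * N)⁻¹)
        ≤ ∑ k, ∑ l, ((M:ℝ) * N)⁻¹ * (‖p.1 k‖ + ‖p.2 l‖) := by
          refine Finset.sum_le_sum fun k _ => Finset.sum_le_sum fun l _ => ?_
          refine mul_le_mul_of_nonneg_left ?_ (by positivity)
          rw [dist_eq_norm]
          exact norm_sub_le _ _
      _ = (M:ℝ)⁻¹ * ∑ k, ‖p.1 k‖ + (N:ℝ)⁻¹ * ∑ l, ‖p.2 l‖ := by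
          simp only [mul_add, Finset.sum_add_distrib, ← Finset.mul_sum, Finset.sum_const,
            Finset.card_univ, Fintype.card_fin, nsmul_eq_mul]
          field_simp
  -- key step: any coupling of the initial data yields the bound
  have hkey : ∀ c ∈ {c | ∃ ρ : Measure ((Fin M → EuclideanSpace ℝ (Fin d))
        × (Fin N → EuclideanSpace ℝ (Fin d))),
      ρ.map Prod.fst = Pin ∧ ρ.map Prod.snd = Qin ∧
      c = ∫ p, W1 (empiricalMeasure p.1) (empiricalMeasure p.2) ∂ρ},
      DistMK (Pin.map (TM t)) (Qin.map (TN t)) ≤ Real.exp (2 * L * |t|) * c := by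
    rintro c ⟨ρ, h1, h2, rfl⟩
    have hFmeas : Measurable F := hFcont.measurable
    have hm1 : (ρ.map F).map Prod.fst = Pin.map (TM t) := by
      rw [Measure.map_map measurable_fst hFmeas]
      have : (Prod.fst ∘ F) = TM t ∘ Prod.fst := rfl
      rw [this, ← Measure.map_map hTMcont.measurable measurable_fst, h1]
    have hm2 : (ρ.map F).map Prod.snd = Qin.map (TN t) := by
      rw [Measure.map_map measurable_snd hFmeas]
      have : (Prod.snd ∘ F) = TN t ∘ Prod.snd := rfl
      rw [this, ← Measure.map_map hTNcont.measurable measurable_snd, h2]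
    -- integrability
    have hBX : Integrable (fun p : (Fin M → EuclideanSpace ℝ (Fin d))
        × (Fin N → EuclideanSpace ℝ (Fin d)) => ∑ k, ‖p.1 k‖) ρ := by
      have hf : Continuous (fun X : Fin M → EuclideanSpace ℝ (Fin d) => ∑ k, ‖X k‖) :=
        continuous_finset_sum _ fun k _ => (continuous_apply k).norm
      have h := hPmom
      rw [← h1] at h
      exact (integrable_map_measure hf.aestronglyMeasurable
        measurable_fst.aemeasurable).mp h
    have hBY : Integrable (fun p : (Fin M → EuclideanSpace ℝ (Fin d))
        × (Fin N → EuclideanSpace ℝ (Fin d)) => ∑ l, ‖p.2 l‖) ρ := by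
      have hf : Continuous (fun Y : Fin N → EuclideanSpace ℝ (Fin d) => ∑ l, ‖Y l‖) :=
        continuous_finset_sum _ fun l _ => (continuous_apply l).norm
      have h := hQmom
      rw [← h2] at h
      exact (integrable_map_measure hf.aestronglyMeasurable
        measurable_snd.aemeasurable).mp h
    have hB : Integrable (fun p : (Fin M → EuclideanSpace ℝ (Fin d))
        × (Fin N → EuclideanSpace ℝ (Fin d)) =>
        (M:ℝ)⁻¹ * ∑ k, ‖p.1 k‖ + (N:ℝ)⁻¹ * ∑ l, ‖p.2 l‖) ρ :=
      (hBX.const_mul _).add (hBY.const_mul _)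
    have hint_g : Integrable g ρ := by
      refine hB.mono' hgcont.aestronglyMeasurable ?_
      filter_upwards with p
      rw [Real.norm_eq_abs, abs_of_nonneg (hgnonneg p)]
      exact hgbound p
    have hint_gF : Integrable (fun p => g (F p)) ρ := by
      refine (hint_g.const_mul (Real.exp (2 * L * |t|))).mono'
        ((hgcont.comp hFcont).aestronglyMeasurable) ?_
      filter_upwards with p
      rw [Real.norm_eq_abs, abs_of_nonneg (hgnonneg (F p))]
      exact hgF p
    -- the transported coupling gives a member of the target set
    have hbdd : BddBelow {c | ∃ ρ' : Measure ((Fin M → EuclideanSpace ℝ (Fin d))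
        × (Fin N → EuclideanSpace ℝ (Fin d))),
        ρ'.map Prod.fst = Pin.map (TM t) ∧ ρ'.map Prod.snd = Qin.map (TN t) ∧
        c = ∫ p, W1 (empiricalMeasure p.1) (empiricalMeasure p.2) ∂ρ'} := by
      refine ⟨0, ?_⟩
      rintro c' ⟨ρ', _, _, rfl⟩
      exact integral_nonneg fun p => hgnonneg p
    have hmem : (∫ p, W1 (empiricalMeasure p.1) (empiricalMeasure p.2) ∂(ρ.map F))
        ∈ {c | ∃ ρ' : Measure ((Fin M → EuclideanSpace ℝ (Fin d))
        × (Fin N → EuclideanSpace ℝ (Fin d))),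
        ρ'.map Prod.fst = Pin.map (TM t) ∧ ρ'.map Prod.snd = Qin.map (TN t) ∧
        c = ∫ p, W1 (empiricalMeasure p.1) (empiricalMeasure p.2) ∂ρ'} :=
      ⟨ρ.map F, hm1, hm2, rfl⟩
    have hle1 : DistMK (Pin.map (TM t)) (Qin.map (TN t))
        ≤ ∫ p, W1 (empiricalMeasure p.1) (empiricalMeasure p.2) ∂(ρ.map F) := by
      rw [DistMK]
      exact csInf_le hbdd hmem
    have heq : (∫ p, W1 (empiricalMeasure p.1) (empiricalMeasure p.2) ∂(ρ.map F))
        = ∫ p, g (F p) ∂ρ := by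
      rw [← hgdef]
      exact integral_map hFmeas.aemeasurable hgcont.aestronglyMeasurable
    have hle2 : (∫ p, g (F p) ∂ρ)
        ≤ Real.exp (2 * L * |t|) * ∫ p, W1 (empiricalMeasure p.1) (empiricalMeasure p.2) ∂ρ := by
      rw [← hgdef, ← integral_const_mul]
      exact integral_mono hint_gF (hint_g.const_mul _) (fun p => hgF p)
    calc DistMK (Pin.map (TM t)) (Qin.map (TN t))
        ≤ ∫ p, W1 (empiricalMeasure p.1) (empiricalMeasure p.2) ∂(ρ.map F) := hle1
      _ = ∫ p, g (F p) ∂ρ := heq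
      _ ≤ Real.exp (2 * L * |t|)
          * ∫ p, W1 (empiricalMeasure p.1) (empiricalMeasure p.2) ∂ρ := hle2
  -- conclude by taking the infimum over couplings of the initial data
  have hne : {c | ∃ ρ : Measure ((Fin M → EuclideanSpace ℝ (Fin d))
        × (Fin N → EuclideanSpace ℝ (Fin d))),
      ρ.map Prod.fst = Pin ∧ ρ.map Prod.snd = Qin ∧
      c = ∫ p, W1 (empiricalMeasure p.1) (empiricalMeasure p.2) ∂ρ}.Nonempty := by
    refine ⟨_, Pin.prod Qin, ?_, ?_, rfl⟩
    · rw [Measure.map_fst_prod]; simp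
    · rw [Measure.map_snd_prod]; simp
  have hfin : (Real.exp (2 * L * |t|))⁻¹ * DistMK (Pin.map (TM t)) (Qin.map (TN t))
      ≤ DistMK Pin Qin := by
    rw [DistMK]
    refine le_csInf hne ?_
    intro c hc
    rw [inv_mul_le_iff₀ hexp]
    exact hkey c hc
  exact (inv_mul_le_iff₀ hexp).1 hfin
end

section
/- Let T^n_t denote the flow of ż_k = (1/n)∑_{l=1}^n K(z_k, z_l) on (ℝ^d)^n, where K is L-Lipschitz in each variable uniformly in the other. Let α_{lk}(t) be the sup norm over (ℝ^d)^n of the (l,k)-block of the Jacobian matrix of T^n_t. Then α_{lk}(t) ≤ δ_{lk} e^{L|t|} + (1/(2n)) e^{3L|t|} for all k, l = 1,…,n and t ∈ ℝ. -/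
open MeasureTheory

open Set Real Finset
lemma gronwall_exp' {E : Type*} [NormedAddCommGroup E] [NormedSpace ℝ E]
    {f f' : ℝ → E} {L c : ℝ} (hL : 0 < L) (hc : 0 ≤ c) {b : ℝ} (hb : 0 ≤ b)
    (hf : ∀ s, HasDerivAt f (f' s) s)
    (hbound : ∀ s ∈ Set.Icc (0:ℝ) b, ‖f' s‖ ≤ L * ‖f s‖ + c * Real.exp (2*L*s)) :
    ‖f b‖ ≤ ‖f 0‖ * Real.exp (L*b) + (c/L) * (Real.exp (L*b) * (Real.exp (L*b) - 1)) := by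
  have key : ∀ η > (0:ℝ), ‖f b‖ ≤ ‖f 0‖ * Real.exp (L*b)
      + (c/L) * (Real.exp (L*b) * (Real.exp (L*b) - 1)) + η * Real.exp ((L+1)*b) := by
    intro η hη
    set a : ℝ := ‖f 0‖
    set bb : ℝ := c / L with hbb
    have hcLb : c = L * bb := by rw [hbb]; field_simp
    -- barrier
    have hexp : ∀ (μ x : ℝ), HasDerivAt (fun x => Real.exp (μ * x)) (μ * Real.exp (μ * x)) x := by
      intro μ x
      have h1 : HasDerivAt (fun x : ℝ => μ * x) μ x := by
        simpa using (hasDerivAt_id x).const_mul μ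
      simpa [mul_comm] using h1.exp
    set B : ℝ → ℝ := fun x => (a - bb) * Real.exp (L*x) + bb * Real.exp (2*L*x)
        + η * Real.exp ((L+1)*x) with hB
    set B' : ℝ → ℝ := fun x => (a - bb) * (L * Real.exp (L*x)) + bb * (2*L * Real.exp (2*L*x))
        + η * ((L+1) * Real.exp ((L+1)*x)) with hB'
    have hBd : ∀ x, HasDerivAt B (B' x) x := by
      intro x
      exact (((hexp L x).const_mul (a-bb)).add ((hexp (2*L) x).const_mul bb)).add
        ((hexp (L+1) x).const_mul η)
    have main : ∀ ⦃x⦄, x ∈ Icc (0:ℝ) b → ‖f x‖ ≤ B x := by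
      apply image_norm_le_of_norm_deriv_right_lt_deriv_boundary
        (fun x _ => (hf x).continuousAt.continuousWithinAt)
        (fun x _ => (hf x).hasDerivWithinAt) _ hBd
      · intro x hx h2
        have h1 := hbound x (Ico_subset_Icc_self hx)
        have hpos : (0:ℝ) < Real.exp ((L+1)*x) := Real.exp_pos _
        calc ‖f' x‖ ≤ L * ‖f x‖ + c * Real.exp (2*L*x) := h1
          _ = L * B x + L * bb * Real.exp (2*L*x) := by rw [h2, hcLb]
          _ < B' x := by
              simp only [hB, hB']
              nlinarith [Real.exp_pos (L*x), Real.exp_pos (2*L*x)]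
      · show a ≤ B 0
        simp only [hB]
        simp only [mul_zero, Real.exp_zero, mul_one]
        nlinarith
    have := main (right_mem_Icc.2 hb)
    simp only [hB] at this
    calc ‖f b‖ ≤ (a - bb) * Real.exp (L*b) + bb * Real.exp (2*L*b) + η * Real.exp ((L+1)*b) := this
      _ = a * Real.exp (L*b) + bb * (Real.exp (L*b) * (Real.exp (L*b) - 1)) + η * Real.exp ((L+1)*b) := by
          have h2 : Real.exp (2*L*b) = Real.exp (L*b) * Real.exp (L*b) := by
            rw [← Real.exp_add]; ring_nf
          rw [h2]; ring
      _ ≤ _ := le_refl _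
  refine le_of_forall_pos_le_add fun ε hε => ?_
  have hE : (0:ℝ) < Real.exp ((L+1)*b) := Real.exp_pos _
  have := key (ε / Real.exp ((L+1)*b)) (by positivity)
  calc ‖f b‖ ≤ _ := this
    _ = ‖f 0‖ * Real.exp (L*b) + (c/L) * (Real.exp (L*b) * (Real.exp (L*b) - 1)) + ε := by
        field_simp

lemma lip_aux {E : Type*} [NormedAddCommGroup E] [NormedSpace ℝ E]
    {n : ℕ} (hn : 0 < n) {L : ℝ} (hL : 0 < L)
    (K : E × E → E)
    (hKlip1 : ∀ z' z₁ z₂, ‖K (z₁, z') - K (z₂, z')‖ ≤ L * ‖z₁ - z₂‖)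
    (hKlip2 : ∀ z z₁ z₂, ‖K (z, z₁) - K (z, z₂)‖ ≤ L * ‖z₁ - z₂‖)
    (T : ℝ → (Fin n → E) → (Fin n → E))
    (hT0 : ∀ Z, T 0 Z = Z)
    (hODE : ∀ Z k t, HasDerivAt (fun s => T s Z k)
      ((n : ℝ)⁻¹ • ∑ l, K (T t Z k, T t Z l)) t)
    {t : ℝ} (ht : 0 ≤ t) (l k : Fin n) (Z W : Fin n → E)
    (hW : ∀ m, m ≠ k → W m = Z m) :
    ‖T t Z l - T t W l‖ ≤ ((if l = k then 1 else 0) * Real.exp (L * t)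
      + (1 / n) * (Real.exp (L * t) * (Real.exp (L * t) - 1))) * ‖Z k - W k‖ := by
  have hn' : (0:ℝ) < n := by exact_mod_cast hn
  set Δ : ℝ := ‖Z k - W k‖ with hΔ
  have hΔ0 : 0 ≤ Δ := norm_nonneg _
  set e := (PiLp.continuousLinearEquiv 1 ℝ (fun _ : Fin n => E)).symm with he
  have hnorm : ∀ x : Fin n → E, ‖e x‖ = ∑ m, ‖x m‖ := by
    intro x; rw [he, PiLp.norm_eq_sum (by norm_num)]; simp
  -- step 1
  set F : ℝ → PiLp 1 (fun _ : Fin n => E) := fun s => e (fun m => T s Z m - T s W m) with hF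
  set F' : ℝ → PiLp 1 (fun _ : Fin n => E) := fun s => e (fun m =>
      (n : ℝ)⁻¹ • ∑ j, K (T s Z m, T s Z j) - (n : ℝ)⁻¹ • ∑ j, K (T s W m, T s W j)) with hF'
  have hFd : ∀ s, HasDerivAt F (F' s) s := by
    intro s
    exact (e.hasFDerivAt).comp_hasDerivAt s
      (hasDerivAt_pi.2 fun m => (hODE Z m s).sub (hODE W m s))
  -- key pointwise bound for differences of the vector field
  have hKd : ∀ (a b c d : E), ‖K (a, b) - K (c, d)‖ ≤ L * ‖a - c‖ + L * ‖b - d‖ := by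
    intro a b c d
    calc ‖K (a, b) - K (c, d)‖ ≤ ‖K (a, b) - K (c, b)‖ + ‖K (c, b) - K (c, d)‖ := by
          have := norm_sub_le_norm_sub_add_norm_sub (K (a,b)) (K (c,b)) (K (c,d))
          simpa using this
      _ ≤ L * ‖a - c‖ + L * ‖b - d‖ := add_le_add (hKlip1 b a c) (hKlip2 c b d)
  have h1 : ∀ (s : ℝ) (m : Fin n), ‖(n : ℝ)⁻¹ • ∑ j, K (T s Z m, T s Z j)
      - (n : ℝ)⁻¹ • ∑ j, K (T s W m, T s W j)‖
      ≤ (n : ℝ)⁻¹ * ∑ j, (L * ‖T s Z m - T s W m‖ + L * ‖T s Z j - T s W j‖) := by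
    intro s m
    rw [← smul_sub, ← Finset.sum_sub_distrib, norm_smul]
    simp only [norm_inv, Real.norm_natCast]
    exact mul_le_mul_of_nonneg_left
      ((norm_sum_le _ _).trans (Finset.sum_le_sum fun j _ => hKd _ _ _ _))
      (by positivity)
  have hFbound : ∀ s, ‖F' s‖ ≤ 2 * L * ‖F s‖ := by
    intro s
    rw [hF', hF, hnorm, hnorm]
    calc ∑ m, ‖(n : ℝ)⁻¹ • ∑ j, K (T s Z m, T s Z j) - (n : ℝ)⁻¹ • ∑ j, K (T s W m, T s W j)‖
        ≤ ∑ m, (n : ℝ)⁻¹ * ∑ j, (L * ‖T s Z m - T s W m‖ + L * ‖T s Z j - T s W j‖) :=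
          Finset.sum_le_sum fun m _ => h1 s m
      _ = ∑ m, (L * ‖T s Z m - T s W m‖ + (n:ℝ)⁻¹ * L * ∑ j, ‖T s Z j - T s W j‖) := by
          refine Finset.sum_congr rfl fun m _ => ?_
          rw [Finset.sum_add_distrib, Finset.sum_const, ← Finset.mul_sum]
          simp only [Finset.card_univ, Fintype.card_fin, nsmul_eq_mul]
          field_simp
      _ = 2 * L * ∑ m, ‖T s Z m - T s W m‖ := by
          rw [Finset.sum_add_distrib, Finset.sum_const, ← Finset.mul_sum]
          simp only [Finset.card_univ, Fintype.card_fin, nsmul_eq_mul]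
          field_simp
          ring
  have hF0 : ‖F 0‖ = Δ := by
    rw [hF, hnorm]
    rw [Finset.sum_eq_single k]
    · simp [hT0, hΔ]
    · intro m _ hm
      simp [hT0, hW m hm]
    · simp
  have hstep1 : ∀ s ∈ Icc (0:ℝ) t, ‖F s‖ ≤ Δ * Real.exp (2 * L * s) := by
    intro s hs
    have := norm_le_gronwallBound_of_norm_deriv_right_le
      (f := F) (f' := F') (δ := Δ) (K := 2 * L) (ε := 0) (a := 0) (b := t)
      (fun x _ => (hFd x).continuousAt.continuousWithinAt)
      (fun x _ => (hFd x).hasDerivWithinAt)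
      (le_of_eq hF0)
      (fun x _ => by simpa using hFbound x) s hs
    simpa [gronwallBound_ε0] using this
  -- step 2
  set f : ℝ → E := fun s => T s Z l - T s W l with hf
  set f' : ℝ → E := fun s =>
      (n : ℝ)⁻¹ • ∑ j, K (T s Z l, T s Z j) - (n : ℝ)⁻¹ • ∑ j, K (T s W l, T s W j) with hf'
  have hfd : ∀ s, HasDerivAt f (f' s) s := fun s => (hODE Z l s).sub (hODE W l s)
  set c : ℝ := (n : ℝ)⁻¹ * L * Δ with hc
  have hc0 : 0 ≤ c := by positivity
  have hfbound : ∀ s ∈ Icc (0:ℝ) t, ‖f' s‖ ≤ L * ‖f s‖ + c * Real.exp (2 * L * s) := by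
    intro s hs
    have h2 := h1 s l
    have h3 : (n:ℝ)⁻¹ * ∑ j, (L * ‖T s Z l - T s W l‖ + L * ‖T s Z j - T s W j‖)
        = L * ‖f s‖ + (n:ℝ)⁻¹ * L * ‖F s‖ := by
      rw [hf, hF, hnorm]
      rw [Finset.sum_add_distrib, Finset.sum_const, ← Finset.mul_sum]
      simp only [Finset.card_univ, Fintype.card_fin, nsmul_eq_mul]
      field_simp
    rw [hf']
    refine (h2.trans_eq h3).trans ?_
    have h4 : (n:ℝ)⁻¹ * L * ‖F s‖ ≤ c * Real.exp (2 * L * s) := by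
      rw [hc]
      have := hstep1 s hs
      calc (n:ℝ)⁻¹ * L * ‖F s‖ ≤ (n:ℝ)⁻¹ * L * (Δ * Real.exp (2*L*s)) := by
            exact mul_le_mul_of_nonneg_left this (by positivity)
        _ = (n:ℝ)⁻¹ * L * Δ * Real.exp (2*L*s) := by ring
    linarith
  have hmain := gronwall_exp' hL hc0 ht hfd hfbound
  have hf0 : ‖f 0‖ = (if l = k then 1 else 0) * Δ := by
    rw [hf]
    by_cases hlk : l = k
    · subst hlk; simp [hT0, hΔ]
    · simp [hT0, hW l hlk, hlk]
  have hcL : c / L = Δ / n := by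
    rw [hc]; field_simp
  rw [hf0, hcL] at hmain
  calc ‖T t Z l - T t W l‖ = ‖f t‖ := by rw [hf]
    _ ≤ (if l = k then 1 else 0) * Δ * Real.exp (L*t)
        + Δ / n * (Real.exp (L*t) * (Real.exp (L*t) - 1)) := hmain
    _ = ((if l = k then 1 else 0) * Real.exp (L * t)
        + (1 / n) * (Real.exp (L * t) * (Real.exp (L * t) - 1))) * Δ := by ring



/-- Jacobian bound for the `n`-particle mean-field flow: if `T^n_t` is the flow of
`żₖ = (1/n) ∑_l K(zₖ, z_l)` with `K` `L`-Lipschitz in each variable uniformly in the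
other, then the `(l,k)`-block of the Jacobian of `T^n_t` satisfies
`α_{lk}(t) ≤ δ_{lk} e^{L|t|} + (1/(2n)) e^{3L|t|}`. -/
theorem stmt_17 (d n : ℕ) (hn : 0 < n) (L : ℝ) (hL : 0 < L)
    (K : EuclideanSpace ℝ (Fin d) × EuclideanSpace ℝ (Fin d) → EuclideanSpace ℝ (Fin d))
    (hKcont : Continuous K)
    (hKlip1 : ∀ z' z₁ z₂, ‖K (z₁, z') - K (z₂, z')‖ ≤ L * ‖z₁ - z₂‖)
    (hKlip2 : ∀ z z₁ z₂, ‖K (z, z₁) - K (z, z₂)‖ ≤ L * ‖z₁ - z₂‖)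
    -- the `n`-particle flow `T^n_t`
    (T : ℝ → (Fin n → EuclideanSpace ℝ (Fin d)) → (Fin n → EuclideanSpace ℝ (Fin d)))
    (hT0 : ∀ Z, T 0 Z = Z)
    (hODE : ∀ Z k t, HasDerivAt (fun s => T s Z k)
      ((n : ℝ)⁻¹ • ∑ l, K (T t Z k, T t Z l)) t)
    -- differentiability of the flow with respect to the initial data
    (hTdiff : ∀ t l, Differentiable ℝ (fun Z => T t Z l)) :
    ∀ (t : ℝ) (l k : Fin n) (Z : Fin n → EuclideanSpace ℝ (Fin d))
      (v : EuclideanSpace ℝ (Fin d)),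
      ‖fderiv ℝ (fun W => T t W l) Z (Pi.single k v)‖ ≤
        ((if l = k then 1 else 0) * Real.exp (L * |t|) +
          (1 / (2 * n)) * Real.exp (3 * L * |t|)) * ‖v‖ := by
  intro t l k Z v
  have hn' : (0:ℝ) < n := by exact_mod_cast hn
  set u : Fin n → EuclideanSpace ℝ (Fin d) := Pi.single k v with hu
  set C0 : ℝ := (if l = k then 1 else 0) * Real.exp (L * |t|)
      + (1 / n) * (Real.exp (L * |t|) * (Real.exp (L * |t|) - 1)) with hC0
  set C : ℝ := (if l = k then 1 else 0) * Real.exp (L * |t|)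
      + (1 / (2 * n)) * Real.exp (3 * L * |t|) with hC
  have hite : (0:ℝ) ≤ (if l = k then 1 else 0) := by split <;> norm_num
  have hCpos : 0 ≤ C := by
    rw [hC]
    have := Real.exp_pos (L * |t|)
    have := Real.exp_pos (3 * L * |t|)
    positivity
  -- the Lipschitz estimate in the initial data, for both signs of t
  have hlipZW : ∀ Z W : Fin n → EuclideanSpace ℝ (Fin d), (∀ m, m ≠ k → W m = Z m) →
      ‖T t Z l - T t W l‖ ≤ C0 * ‖Z k - W k‖ := by
    intro Z W hW
    rcases le_or_gt 0 t with h | h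
    · have := lip_aux hn hL K hKlip1 hKlip2 T hT0 hODE h l k Z W hW
      rw [hC0, abs_of_nonneg h]
      exact this
    · -- time reversal
      set K' : EuclideanSpace ℝ (Fin d) × EuclideanSpace ℝ (Fin d) → EuclideanSpace ℝ (Fin d) := fun p => -K p with hK'
      set T' : ℝ → (Fin n → EuclideanSpace ℝ (Fin d)) → (Fin n → EuclideanSpace ℝ (Fin d)) := fun s => T (-s) with hT'
      have hODE' : ∀ Z k s, HasDerivAt (fun s => T' s Z k)
          ((n : ℝ)⁻¹ • ∑ j, K' (T' s Z k, T' s Z j)) s := by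
        intro Z k s
        have h0 := hODE Z k (-s)
        have h2 : HasDerivAt (fun s : ℝ => T (-s) Z k)
            ((-1 : ℝ) • ((n : ℝ)⁻¹ • ∑ j, K (T (-s) Z k, T (-s) Z j))) s :=
          h0.scomp s (hasDerivAt_neg s)
        have h3 : (-1 : ℝ) • ((n : ℝ)⁻¹ • ∑ j, K (T (-s) Z k, T (-s) Z j))
            = (n : ℝ)⁻¹ • ∑ j : Fin n, K' (T' s Z k, T' s Z j) := by
          simp [hK', hT', Finset.sum_neg_distrib, smul_neg]
        rw [h3] at h2
        exact h2
      have hK'lip1 : ∀ z' z₁ z₂ : EuclideanSpace ℝ (Fin d), ‖K' (z₁, z') - K' (z₂, z')‖ ≤ L * ‖z₁ - z₂‖ := by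
        intro z' z₁ z₂
        rw [hK']
        simp only [neg_sub_neg]
        rw [norm_sub_rev (K (z₂, z'))]
        exact hKlip1 z' z₁ z₂
      have hK'lip2 : ∀ z z₁ z₂ : EuclideanSpace ℝ (Fin d), ‖K' (z, z₁) - K' (z, z₂)‖ ≤ L * ‖z₁ - z₂‖ := by
        intro z z₁ z₂
        rw [hK']
        simp only [neg_sub_neg]
        rw [norm_sub_rev (K (z, z₂))]
        exact hKlip2 z z₁ z₂
      have hT0' : ∀ Z, T' 0 Z = Z := by intro Z; simp [hT', hT0]
      have := lip_aux hn hL K' hK'lip1 hK'lip2 T' hT0' hODE'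
        (t := -t) (by linarith) l k Z W hW
      rw [hC0, abs_of_neg h]
      simpa [hT'] using this
  have hC0C : C0 ≤ C := by
    rw [hC0, hC]
    have hx : 0 ≤ L * |t| := by positivity
    have hy : 1 ≤ Real.exp (L * |t|) := Real.one_le_exp hx
    have hy3 : Real.exp (3 * L * |t|)
        = Real.exp (L * |t|) * Real.exp (L * |t|) * Real.exp (L * |t|) := by
      rw [← Real.exp_add, ← Real.exp_add]; ring_nf
    rw [hy3]
    have key : Real.exp (L * |t|) * (Real.exp (L * |t|) - 1)
        ≤ (1/2) * (Real.exp (L * |t|) * Real.exp (L * |t|) * Real.exp (L * |t|)) := by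
      nlinarith [hy, mul_nonneg (Real.exp_pos (L * |t|)).le
        (sq_nonneg (Real.exp (L * |t|) - 1)), (Real.exp_pos (L * |t|)).le]
    have h1n : (0:ℝ) < 1 / n := by positivity
    have : (1 / (n:ℝ)) * (Real.exp (L * |t|) * (Real.exp (L * |t|) - 1))
        ≤ (1 / (2 * n)) * (Real.exp (L * |t|) * Real.exp (L * |t|) * Real.exp (L * |t|)) := by
      have := mul_le_mul_of_nonneg_left key h1n.le
      calc (1 / (n:ℝ)) * (Real.exp (L * |t|) * (Real.exp (L * |t|) - 1))
          ≤ (1 / (n:ℝ)) * ((1/2) * (Real.exp (L * |t|) * Real.exp (L * |t|) * Real.exp (L * |t|))) := this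
        _ = (1 / (2 * n)) * (Real.exp (L * |t|) * Real.exp (L * |t|) * Real.exp (L * |t|)) := by
            field_simp
    linarith
  -- the line through Z in direction u
  set g : ℝ → EuclideanSpace ℝ (Fin d) := fun s => T t (Z + s • u) l with hg
  have hline : HasDerivAt (fun s : ℝ => Z + s • u) u 0 := by
    simpa using ((hasDerivAt_id (0:ℝ)).smul_const u).const_add Z
  set D : EuclideanSpace ℝ (Fin d) := fderiv ℝ (fun W => T t W l) Z u with hD
  have hZ0 : Z + (0:ℝ) • u = Z := by simp
  have hgd : HasDerivAt g D 0 := by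
    have h5 : HasFDerivAt (fun W => T t W l) (fderiv ℝ (fun W => T t W l) Z)
        (Z + (0:ℝ) • u) := by
      rw [hZ0]; exact ((hTdiff t l) Z).hasFDerivAt
    exact h5.comp_hasDerivAt 0 hline
  have hFD : HasFDerivAt g (ContinuousLinearMap.smulRight (1 : ℝ →L[ℝ] ℝ) D) 0 :=
    hasDerivAt_iff_hasFDerivAt.1 hgd
  have hlipg : ∀ s : ℝ, ‖g s - g 0‖ ≤ C * ‖v‖ * ‖s - 0‖ := by
    intro s
    have h6 : ∀ m, m ≠ k → Z m = (Z + s • u) m := by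
      intro m hm
      simp [hu, Pi.single_eq_of_ne hm]
    have h7 := hlipZW (Z + s • u) Z h6
    have h8 : (Z + s • u) k - Z k = s • v := by
      simp [hu, Pi.single_eq_same]
    rw [h8] at h7
    have h9 : ‖g s - g 0‖ = ‖T t (Z + s • u) l - T t Z l‖ := by rw [hg]; simp
    rw [h9]
    calc ‖T t (Z + s • u) l - T t Z l‖ ≤ C0 * ‖s • v‖ := h7
      _ = C0 * (|s| * ‖v‖) := by rw [norm_smul]; simp
      _ ≤ C * (|s| * ‖v‖) := by
          apply mul_le_mul_of_nonneg_right hC0C (by positivity)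
      _ = C * ‖v‖ * ‖s - 0‖ := by rw [sub_zero, Real.norm_eq_abs]; ring
  have hnorm1 : ‖ContinuousLinearMap.smulRight (1 : ℝ →L[ℝ] ℝ) D‖ ≤ C * ‖v‖ := by
    apply hFD.le_of_lip' (by positivity)
    filter_upwards with s using hlipg s
  have hDle : ‖D‖ ≤ ‖ContinuousLinearMap.smulRight (1 : ℝ →L[ℝ] ℝ) D‖ := by
    calc ‖D‖ = ‖(ContinuousLinearMap.smulRight (1 : ℝ →L[ℝ] ℝ) D) 1‖ := by simp
      _ ≤ ‖ContinuousLinearMap.smulRight (1 : ℝ →L[ℝ] ℝ) D‖ * ‖(1:ℝ)‖ :=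
          ContinuousLinearMap.le_opNorm _ _
      _ = ‖ContinuousLinearMap.smulRight (1 : ℝ →L[ℝ] ℝ) D‖ := by simp
  show ‖D‖ ≤ C * ‖v‖
  exact hDle.trans hnorm1
end

section
/- In the setting of the Jacobian bound for the N-particle flow: for every φ_m ∈ C¹_c((ℝ^d)^m) viewed as a function of n ≥ m variables, ‖∑_{k=1}^n |∂_{z_k}(φ_m ∘ T^n_s)|‖_{L^∞((ℝ^d)^n)} ≤ (e^{L|s|} + (1/2)e^{3L|s|}) ∑_{k=1}^m ‖∂_{z_k} φ_m‖_{L^∞((ℝ^d)^m)}, uniformly in n. -/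
open MeasureTheory

open Set Real Finset

section Gronwall

variable {E : Type*} [NormedAddCommGroup E] [NormedSpace ℝ E]

lemma gronwall_var {g g' : ℝ → E} {L c b : ℝ} (hL : 0 < L)
    (hg : ContinuousOn g (Icc 0 b))
    (hg' : ∀ x ∈ Ico 0 b, HasDerivWithinAt g (g' x) (Ici x) x)
    (bound : ∀ x ∈ Ico 0 b, ‖g' x‖ ≤ L * ‖g x‖ + c * exp (2 * L * x)) :
    ∀ x ∈ Icc 0 b, ‖g x‖ ≤ ‖g 0‖ * exp (L * x) + c / L * (exp (2 * L * x) - exp (L * x)) := by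
  intro x hx
  set B0 : ℝ → ℝ := fun t => ‖g 0‖ * exp (L * t) + c / L * (exp (2 * L * t) - exp (L * t))
    with hB0
  have key : ∀ η > (0:ℝ), ‖g x‖ ≤ B0 x + η * ((x + 1) * exp (L * x)) := by
    intro η hη
    have main : ∀ ⦃y⦄, y ∈ Icc 0 b →
        ‖g y‖ ≤ B0 y + η * ((y + 1) * exp (L * y)) := by
      refine image_le_of_liminf_slope_right_lt_deriv_boundary
        (f := fun t => ‖g t‖) (f' := fun t => ‖g' t‖)
        (continuous_norm.comp_continuousOn hg)
        (fun y hy r hr => (hg' y hy).liminf_right_slope_norm_le hr)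
        ?_ (B' := fun t => L * (B0 t + η * ((t + 1) * exp (L * t))) + c * exp (2 * L * t)
             + η * exp (L * t)) ?_ ?_
      · simp [B0]; positivity
      · intro y
        have h1 : HasDerivAt (fun t : ℝ => L * t) L y := by
          simpa using (hasDerivAt_id y).const_mul L
        have h2 : HasDerivAt (fun t : ℝ => 2 * L * t) (2 * L) y := by
          simpa using (hasDerivAt_id y).const_mul (2 * L)
        have e1 : HasDerivAt (fun t : ℝ => exp (L * t)) (exp (L * y) * L) y := h1.exp
        have e2 : HasDerivAt (fun t : ℝ => exp (2 * L * t)) (exp (2 * L * y) * (2 * L)) y :=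
          h2.exp
        have hB : HasDerivAt (fun t => B0 t + η * ((t + 1) * exp (L * t)))
            (‖g 0‖ * (exp (L * y) * L) + c / L * (exp (2 * L * y) * (2 * L) - exp (L * y) * L)
              + η * (1 * exp (L * y) + (y + 1) * (exp (L * y) * L))) y := by
          exact ((e1.const_mul ‖g 0‖).add ((e2.sub e1).const_mul (c / L))).add
            ((((hasDerivAt_id y).add_const 1).mul e1).const_mul η)
        convert hB using 1
        simp only [B0]
        field_simp
        ring
      · intro y hy hfB
        have hb := bound y hy
        have : L * ‖g y‖ + c * exp (2 * L * y)
            < L * (B0 y + η * ((y + 1) * exp (L * y))) + c * exp (2 * L * y)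
              + η * exp (L * y) := by
          rw [← hfB]
          have : 0 < η * exp (L * y) := mul_pos hη (exp_pos _)
          linarith
        exact lt_of_le_of_lt hb this
    exact main hx
  have hC : 0 < (x + 1) * exp (L * x) :=
    mul_pos (by linarith [hx.1] : (0:ℝ) < x + 1) (exp_pos _)
  refine le_of_forall_pos_le_add fun ε hε => ?_
  have := key (ε / ((x + 1) * exp (L * x))) (div_pos hε hC)
  rwa [div_mul_cancel₀ _ (ne_of_gt hC)] at this

lemma sum_norm_bound {n : ℕ} (hn : 0 < n) {L b : ℝ}
    (G G' : ℝ → Fin n → E)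
    (hd : ∀ t l, HasDerivAt (fun s => G s l) (G' t l) t)
    (hB : ∀ t k, ‖G' t k‖ ≤ L * ‖G t k‖ + (L / n) * ∑ l, ‖G t l‖) :
    ∀ t ∈ Icc 0 b, ∑ l, ‖G t l‖ ≤ (∑ l, ‖G 0 l‖) * exp (2 * L * t) := by
  set e : PiLp 1 (fun _ : Fin n => E) ≃L[ℝ] (Fin n → E) :=
    PiLp.continuousLinearEquiv 1 ℝ (fun _ : Fin n => E) with he
  set F : ℝ → PiLp 1 (fun _ : Fin n => E) := fun t => e.symm (G t) with hF
  have hnorm : ∀ (v : PiLp 1 (fun _ : Fin n => E)), ‖v‖ = ∑ l, ‖v l‖ := by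
    intro v
    rw [PiLp.norm_eq_sum (by norm_num)]
    simp
  have hFn : ∀ t, ‖F t‖ = ∑ l, ‖G t l‖ := fun t => hnorm _
  have hF'd : ∀ t, HasDerivAt F (e.symm (G' t)) t := by
    intro t
    exact e.symm.hasFDerivAt.comp_hasDerivAt t (hasDerivAt_pi.2 (fun l => hd t l))
  have key := norm_le_gronwallBound_of_norm_deriv_right_le
    (f := F) (f' := fun t => e.symm (G' t)) (δ := ‖F 0‖) (K := 2 * L) (ε := 0)
    (a := 0) (b := b)
    (fun t _ => (hF'd t).continuousAt.continuousWithinAt)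
    (fun t _ => (hF'd t).hasDerivWithinAt)
    le_rfl ?_
  · intro t ht
    have := key t ht
    rw [gronwallBound_ε0, sub_zero] at this
    simpa [hFn] using this
  · intro t _
    have hnn : ‖e.symm (G' t)‖ = ∑ l, ‖G' t l‖ := hnorm _
    rw [hnn, hFn, add_zero]
    calc ∑ l, ‖G' t l‖ ≤ ∑ l, (L * ‖G t l‖ + (L / n) * ∑ j, ‖G t j‖) :=
          Finset.sum_le_sum fun l _ => hB t l
      _ = L * ∑ l, ‖G t l‖ + n * ((L / n) * ∑ j, ‖G t j‖) := by
          rw [Finset.sum_add_distrib, ← Finset.mul_sum, Finset.sum_const, card_univ,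
            Fintype.card_fin, nsmul_eq_mul]
      _ = 2 * L * ∑ l, ‖G t l‖ := by
          field_simp
          ring

lemma comp_norm_bound {n : ℕ} (hn : 0 < n) {L b : ℝ} (hL : 0 < L) (hb : 0 ≤ b)
    (G G' : ℝ → Fin n → E)
    (hd : ∀ t l, HasDerivAt (fun s => G s l) (G' t l) t)
    (hB : ∀ t k, ‖G' t k‖ ≤ L * ‖G t k‖ + (L / n) * ∑ l, ‖G t l‖) (k : Fin n) :
    ‖G b k‖ ≤ ‖G 0 k‖ * exp (L * b)
      + ((∑ l, ‖G 0 l‖) / n) * (exp (2 * L * b) - exp (L * b)) := by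
  have hsum := sum_norm_bound hn G G' hd hB (b := b)
  have key := gronwall_var (g := fun t => G t k) (g' := fun t => G' t k)
    (c := (L / n) * ∑ l, ‖G 0 l‖) (b := b) hL
    (fun t _ => (hd t k).continuousAt.continuousWithinAt)
    (fun t _ => (hd t k).hasDerivWithinAt) ?_ b (by constructor <;> linarith)
  · convert key using 2
    field_simp
  · intro t ht
    refine (hB t k).trans ?_
    have h2 := hsum t ⟨ht.1, le_of_lt ht.2⟩
    have hnn : (0:ℝ) ≤ L / n := by positivity
    nlinarith [mul_le_mul_of_nonneg_left h2 hnn]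

end Gronwall

/-- The continuous linear embedding of `ℝ^d` into the `k`-th coordinate of `(ℝ^d)^n`. -/
noncomputable def coordCLM (d n : ℕ) (k : Fin n) :
    EuclideanSpace ℝ (Fin d) →L[ℝ] (Fin n → EuclideanSpace ℝ (Fin d)) :=
  LinearMap.toContinuousLinearMap (LinearMap.single ℝ (fun _ : Fin n => EuclideanSpace ℝ (Fin d)) k)

/-- The norm of the `k`-th partial gradient `∂_{z_k} ψ(Z)` of a scalar function `ψ`
on `(ℝ^d)^n`. -/
noncomputable def partialGradNorm {d n : ℕ} (ψ : (Fin n → EuclideanSpace ℝ (Fin d)) → ℝ)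
    (k : Fin n) (Z : Fin n → EuclideanSpace ℝ (Fin d)) : ℝ :=
  ‖(fderiv ℝ ψ Z).comp (coordCLM d n k)‖

set_option maxHeartbeats 1000000 in
/-- Uniform-in-`n` bound on the derivatives of `φ_m ∘ T^n_s`:
`‖∑_k |∂_{z_k}(φ_m ∘ T^n_s)|‖_∞ ≤ (e^{L|s|} + ½ e^{3L|s|}) ∑_{k≤m} ‖∂_{z_k} φ_m‖_∞`. -/
theorem stmt_18 (d n m : ℕ) (hm : 1 ≤ m) (hmn : m ≤ n) (L : ℝ) (hL : 0 < L)
    (K : EuclideanSpace ℝ (Fin d) × EuclideanSpace ℝ (Fin d) → EuclideanSpace ℝ (Fin d))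
    (hKcont : Continuous K)
    (hKanti : ∀ z z', K (z, z') + K (z', z) = 0)
    (hKlip1 : ∀ z' z₁ z₂, ‖K (z₁, z') - K (z₂, z')‖ ≤ L * ‖z₁ - z₂‖)
    (hKlip2 : ∀ z z₁ z₂, ‖K (z, z₁) - K (z, z₂)‖ ≤ L * ‖z₁ - z₂‖)
    -- the `n`-particle flow `T^n_s`
    (T : ℝ → (Fin n → EuclideanSpace ℝ (Fin d)) → (Fin n → EuclideanSpace ℝ (Fin d)))
    (hT0 : ∀ Z, T 0 Z = Z)
    (hODE : ∀ Z k t, HasDerivAt (fun s => T s Z k)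
      ((n : ℝ)⁻¹ • ∑ l, K (T t Z k, T t Z l)) t)
    (hTdiff : ∀ t l, Differentiable ℝ (fun Z => T t Z l))
    -- a `C¹` compactly supported test function of `m` variables, viewed as a
    -- function of `n ≥ m` variables
    (φm : (Fin m → EuclideanSpace ℝ (Fin d)) → ℝ)
    (hφ : ContDiff ℝ 1 φm) (hφsupp : HasCompactSupport φm) :
    ∀ (s : ℝ) (Z : Fin n → EuclideanSpace ℝ (Fin d)),
      ∑ k : Fin n,
        partialGradNorm (fun W => φm fun i : Fin m => T s W (Fin.castLE hmn i)) k Z ≤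
        (Real.exp (L * |s|) + (1 / 2) * Real.exp (3 * L * |s|)) *
          ∑ k : Fin m, ⨆ X, partialGradNorm φm k X := by
  intro s Z
  have hn : 0 < n := lt_of_lt_of_le hm hmn
  have hn' : (0:ℝ) < n := by exact_mod_cast hn
  -- the Lipschitz bound for the difference of vector fields
  have hKd : ∀ (V W : Fin n → EuclideanSpace ℝ (Fin d)) (l : Fin n),
      ‖(n : ℝ)⁻¹ • ∑ j, K (V l, V j) - (n : ℝ)⁻¹ • ∑ j, K (W l, W j)‖
        ≤ L * ‖V l - W l‖ + (L / n) * ∑ j, ‖V j - W j‖ := by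
    intro V W l
    rw [← smul_sub, norm_smul, ← Finset.sum_sub_distrib]
    have h1 : ‖∑ j, (K (V l, V j) - K (W l, W j))‖
        ≤ ∑ j : Fin n, (L * ‖V l - W l‖ + L * ‖V j - W j‖) := by
      refine (norm_sum_le _ _).trans (Finset.sum_le_sum fun j _ => ?_)
      calc ‖K (V l, V j) - K (W l, W j)‖
          ≤ ‖K (V l, V j) - K (W l, V j)‖ + ‖K (W l, V j) - K (W l, W j)‖ :=
            norm_sub_le_norm_sub_add_norm_sub _ _ _
        _ ≤ L * ‖V l - W l‖ + L * ‖V j - W j‖ :=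
            add_le_add (hKlip1 _ _ _) (hKlip2 _ _ _)
    have h2 : ∑ j : Fin n, (L * ‖V l - W l‖ + L * ‖V j - W j‖)
        = n * (L * ‖V l - W l‖) + L * ∑ j, ‖V j - W j‖ := by
      rw [Finset.sum_add_distrib, ← Finset.mul_sum, Finset.sum_const, card_univ,
        Fintype.card_fin, nsmul_eq_mul]
      simp [Finset.mul_sum]
      ring
    have hninv : ‖((n:ℝ)⁻¹ : ℝ)‖ = (n:ℝ)⁻¹ := by
      rw [Real.norm_eq_abs, abs_of_nonneg (by positivity)]
    rw [hninv]
    calc (n:ℝ)⁻¹ * ‖∑ j, (K (V l, V j) - K (W l, W j))‖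
        ≤ (n:ℝ)⁻¹ * (n * (L * ‖V l - W l‖) + L * ∑ j, ‖V j - W j‖) := by
          rw [← h2]
          exact mul_le_mul_of_nonneg_left h1 (by positivity)
      _ = L * ‖V l - W l‖ + (L / n) * ∑ j, ‖V j - W j‖ := by
          field_simp
  -- the flow is Lipschitz with the precise constants
  have LIP : ∀ (σ : ℝ) (V W : Fin n → EuclideanSpace ℝ (Fin d)) (k : Fin n),
      ‖T σ V k - T σ W k‖ ≤ ‖V k - W k‖ * Real.exp (L * |σ|)
        + ((∑ l, ‖V l - W l‖) / n) * (Real.exp (2 * L * |σ|) - Real.exp (L * |σ|)) := by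
    intro σ V W k
    rcases le_or_gt 0 σ with hσ | hσ
    · have key := comp_norm_bound hn hL hσ
        (fun t l => T t V l - T t W l)
        (fun t l => ((n : ℝ)⁻¹ • ∑ j, K (T t V l, T t V j))
          - ((n : ℝ)⁻¹ • ∑ j, K (T t W l, T t W j)))
        (fun t l => (hODE V l t).sub (hODE W l t))
        (fun t l => hKd (T t V) (T t W) l) k
      rw [abs_of_nonneg hσ]
      simpa [hT0] using key
    · have hb : (0:ℝ) ≤ -σ := by linarith
      have key := comp_norm_bound hn hL hb
        (fun t l => T (-t) V l - T (-t) W l)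
        (fun t l => ((-1:ℝ) • ((n : ℝ)⁻¹ • ∑ j, K (T (-t) V l, T (-t) V j)))
          - ((-1:ℝ) • ((n : ℝ)⁻¹ • ∑ j, K (T (-t) W l, T (-t) W j))))
        (fun t l => ((hODE V l (-t)).scomp t (hasDerivAt_neg t)).sub
          ((hODE W l (-t)).scomp t (hasDerivAt_neg t)))
        (fun t l => by
          beta_reduce
          rw [← smul_sub, norm_smul]
          simpa using hKd (T (-t) V) (T (-t) W) l) k
      rw [abs_of_neg hσ]
      simpa [hT0] using key
  set e1 : ℝ := Real.exp (L * |s|) with he1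
  set e2 : ℝ := Real.exp (2 * L * |s|) with he2
  have he12 : e1 ≤ e2 := by
    rw [he1, he2]
    exact Real.exp_le_exp.2 (by nlinarith [abs_nonneg s, hL.le])
  have hαnn : ∀ (l k : Fin n), (0:ℝ) ≤ (if l = k then e1 else 0) + (1 / n) * (e2 - e1) := by
    intro l k
    have h2 : (0:ℝ) ≤ (1 / n) * (e2 - e1) :=
      mul_nonneg (by positivity) (sub_nonneg.2 he12)
    split_ifs
    · linarith [Real.exp_pos (L * |s|), h2]
    · linarith
  -- the bound on the partial derivatives of the flow
  have hα : ∀ (k l : Fin n),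
      ‖(fderiv ℝ (fun W => T s W l) Z).comp (coordCLM d n k)‖
        ≤ (if l = k then e1 else 0) + (1 / n) * (e2 - e1) := by
    intro k l
    have hin : HasFDerivAt (fun h : EuclideanSpace ℝ (Fin d) => Z + Pi.single k h) (coordCLM d n k) 0 :=
      (coordCLM d n k).hasFDerivAt.const_add Z
    have hz : Z + Pi.single k (0 : EuclideanSpace ℝ (Fin d)) = Z := by simp
    have hout : HasFDerivAt (fun W => T s W l) (fderiv ℝ (fun W => T s W l) Z)
        (Z + Pi.single k (0 : EuclideanSpace ℝ (Fin d))) := by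
      rw [hz]; exact (hTdiff s l Z).hasFDerivAt
    have hcomp : HasFDerivAt (fun h : EuclideanSpace ℝ (Fin d) => T s (Z + Pi.single k h) l)
        ((fderiv ℝ (fun W => T s W l) Z).comp (coordCLM d n k)) 0 := by have := hout.comp 0 hin; exact this
    rw [← hcomp.fderiv]
    refine norm_fderiv_le_of_lip' ℝ (hαnn l k) ?_
    filter_upwards with h
    have hsingle : ∀ j, ‖(Pi.single k h : Fin n → EuclideanSpace ℝ (Fin d)) j‖ = if j = k then ‖h‖ else 0 := by
      intro j
      rcases eq_or_ne j k with rfl | hjk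
      · simp
      · simp [Pi.single_eq_of_ne hjk, if_neg hjk]
    have hdiff : ∀ j, (Z + (Pi.single k h : Fin n → EuclideanSpace ℝ (Fin d))) j - Z j = (Pi.single k h : Fin n → EuclideanSpace ℝ (Fin d)) j := by
      intro j; simp
    have hLIP := LIP s (Z + Pi.single k h) Z l
    simp only [hdiff] at hLIP
    have hsum : ∑ j, ‖(Pi.single k h : Fin n → EuclideanSpace ℝ (Fin d)) j‖ = ‖h‖ := by simp [hsingle]
    rw [hsum, hsingle l] at hLIP
    have hz0 : T s (Z + Pi.single k (0:EuclideanSpace ℝ (Fin d))) l = T s Z l := by rw [hz]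
    rw [hz0, sub_zero]
    refine hLIP.trans (le_of_eq ?_)
    rw [he1, he2]
    split_ifs <;> ring
  -- chain rule
  set Y : Fin m → EuclideanSpace ℝ (Fin d) := fun i => T s Z (Fin.castLE hmn i) with hY
  set A : (Fin n → EuclideanSpace ℝ (Fin d)) →L[ℝ] (Fin m → EuclideanSpace ℝ (Fin d)) :=
    ContinuousLinearMap.pi (fun i : Fin m => fderiv ℝ (fun W => T s W (Fin.castLE hmn i)) Z)
    with hA
  have hYd : HasFDerivAt (fun W => (fun i : Fin m => T s W (Fin.castLE hmn i))) A Z :=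
    hasFDerivAt_pi.2 fun i => (hTdiff s (Fin.castLE hmn i) Z).hasFDerivAt
  have hfd : HasFDerivAt (fun W => φm fun i : Fin m => T s W (Fin.castLE hmn i))
      ((fderiv ℝ φm Y).comp A) Z :=
    ((hφ.differentiable one_ne_zero Y).hasFDerivAt).comp Z hYd
  have hk : ∀ k : Fin n,
      partialGradNorm (fun W => φm fun i : Fin m => T s W (Fin.castLE hmn i)) k Z
        ≤ ∑ i : Fin m, partialGradNorm φm i Y *
            ((if Fin.castLE hmn i = k then e1 else 0) + (1 / n) * (e2 - e1)) := by
    intro k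
    have hbnn : (0:ℝ) ≤ ∑ i : Fin m, partialGradNorm φm i Y *
        ((if Fin.castLE hmn i = k then e1 else 0) + (1 / n) * (e2 - e1)) :=
      Finset.sum_nonneg fun i _ => mul_nonneg (norm_nonneg _) (hαnn _ _)
    unfold partialGradNorm
    rw [hfd.fderiv]
    refine ContinuousLinearMap.opNorm_le_bound _ hbnn ?_
    intro h
    have happ : (((fderiv ℝ φm Y).comp A).comp (coordCLM d n k)) h
        = fderiv ℝ φm Y (A (coordCLM d n k h)) := rfl
    rw [happ]
    set w : Fin m → EuclideanSpace ℝ (Fin d) := A (coordCLM d n k h) with hw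
    have hwsum : w = ∑ i, Pi.single i (w i) := (Finset.univ_sum_single w).symm
    calc ‖fderiv ℝ φm Y w‖
        = ‖∑ i, fderiv ℝ φm Y (Pi.single i (w i))‖ := by
          conv_lhs => rw [hwsum]
          rw [map_sum]
      _ ≤ ∑ i, ‖fderiv ℝ φm Y (Pi.single i (w i))‖ := norm_sum_le _ _
      _ ≤ ∑ i : Fin m, partialGradNorm φm i Y *
            (((if Fin.castLE hmn i = k then e1 else 0) + (1 / n) * (e2 - e1)) * ‖h‖) := by
          refine Finset.sum_le_sum fun i _ => ?_
          have h1 : ‖fderiv ℝ φm Y (Pi.single i (w i))‖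
              ≤ partialGradNorm φm i Y * ‖w i‖ := by
            have : fderiv ℝ φm Y (Pi.single i (w i))
                = ((fderiv ℝ φm Y).comp (coordCLM d m i)) (w i) := rfl
            rw [this]
            exact ContinuousLinearMap.le_opNorm _ _
          have h2 : ‖w i‖ ≤ ((if Fin.castLE hmn i = k then e1 else 0)
              + (1 / n) * (e2 - e1)) * ‖h‖ := by
            have : w i = ((fderiv ℝ (fun W => T s W (Fin.castLE hmn i)) Z).comp
                (coordCLM d n k)) h := rfl
            rw [this]
            exact (ContinuousLinearMap.le_opNorm _ _).trans
              (mul_le_mul_of_nonneg_right (hα k (Fin.castLE hmn i)) (norm_nonneg _))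
          calc ‖fderiv ℝ φm Y (Pi.single i (w i))‖ ≤ partialGradNorm φm i Y * ‖w i‖ := h1
            _ ≤ partialGradNorm φm i Y *
                (((if Fin.castLE hmn i = k then e1 else 0) + (1 / n) * (e2 - e1)) * ‖h‖) :=
              mul_le_mul_of_nonneg_left h2 (norm_nonneg _)
      _ = (∑ i : Fin m, partialGradNorm φm i Y *
            ((if Fin.castLE hmn i = k then e1 else 0) + (1 / n) * (e2 - e1))) * ‖h‖ := by
          rw [Finset.sum_mul]
          congr 1
          ext i
          ring
  -- supremum bounds
  have hbdd : ∀ i : Fin m, BddAbove (Set.range fun X => partialGradNorm φm i X) := by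
    intro i
    obtain ⟨C, hC⟩ := (hφsupp.fderiv (𝕜 := ℝ)).exists_bound_of_continuous
      (hφ.continuous_fderiv one_ne_zero)
    refine ⟨C * ‖coordCLM d m i‖, ?_⟩
    rintro _ ⟨X, rfl⟩
    exact (ContinuousLinearMap.opNorm_comp_le _ _).trans
      (mul_le_mul_of_nonneg_right (hC X) (norm_nonneg _))
  have hle_sup : ∀ i : Fin m, partialGradNorm φm i Y ≤ ⨆ X, partialGradNorm φm i X :=
    fun i => le_ciSup (hbdd i) Y
  have hsup_nn : ∀ i : Fin m, (0:ℝ) ≤ ⨆ X, partialGradNorm φm i X :=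
    fun i => le_trans (norm_nonneg _) (hle_sup i)
  -- conclude
  have step1 := Finset.sum_le_sum fun k (_ : k ∈ Finset.univ) => hk k
  have step2 : ∑ k : Fin n, ∑ i : Fin m, partialGradNorm φm i Y *
      ((if Fin.castLE hmn i = k then e1 else 0) + (1 / n) * (e2 - e1))
      = ∑ i : Fin m, partialGradNorm φm i Y * e2 := by
    rw [Finset.sum_comm]
    refine Finset.sum_congr rfl fun i _ => ?_
    rw [← Finset.mul_sum]
    congr 1
    rw [Finset.sum_add_distrib, Finset.sum_ite_eq, Finset.sum_const, card_univ,
      Fintype.card_fin, nsmul_eq_mul]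
    simp only [Finset.mem_univ, if_true]
    field_simp
    ring
  have he2le : e2 ≤ e1 + (1/2) * Real.exp (3 * L * |s|) := by
    rw [he1, he2, show 2 * L * |s| = L * |s| + L * |s| by ring,
      show 3 * L * |s| = L * |s| + (L * |s| + L * |s|) by ring,
      Real.exp_add, Real.exp_add, Real.exp_add]
    nlinarith [Real.exp_pos (L * |s|),
      mul_nonneg (Real.exp_pos (L * |s|)).le (sq_nonneg (Real.exp (L * |s|) - 1))]
  have step3 : ∑ i : Fin m, partialGradNorm φm i Y * e2
      ≤ ∑ i : Fin m, (⨆ X, partialGradNorm φm i X) * e2 :=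
    Finset.sum_le_sum fun i _ => mul_le_mul_of_nonneg_right (hle_sup i)
      (le_trans (Real.exp_pos _).le he12)
  have step4 : ∑ i : Fin m, (⨆ X, partialGradNorm φm i X) * e2
      ≤ (e1 + (1/2) * Real.exp (3 * L * |s|)) * ∑ i : Fin m, ⨆ X, partialGradNorm φm i X := by
    rw [← Finset.sum_mul, mul_comm (e1 + (1/2) * Real.exp (3 * L * |s|))]
    exact mul_le_mul_of_nonneg_left he2le (Finset.sum_nonneg fun i _ => hsup_nn i)
  calc ∑ k : Fin n,
      partialGradNorm (fun W => φm fun i : Fin m => T s W (Fin.castLE hmn i)) k Z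
      ≤ ∑ k : Fin n, ∑ i : Fin m, partialGradNorm φm i Y *
          ((if Fin.castLE hmn i = k then e1 else 0) + (1 / n) * (e2 - e1)) := step1
    _ = ∑ i : Fin m, partialGradNorm φm i Y * e2 := step2
    _ ≤ ∑ i : Fin m, (⨆ X, partialGradNorm φm i X) * e2 := step3
    _ ≤ (e1 + (1/2) * Real.exp (3 * L * |s|)) * ∑ i : Fin m, ⨆ X, partialGradNorm φm i X :=
        step4
end
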